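/- arXiv:2102.01769 — 3 statements merged into one kernel-verified Lean document; each statement's English description precedes it below -/
import Mathlib

section
/- Let Θ¹, Θ², … be i.i.d. random R×L real matrices with common distribution μ satisfying ∫‖Θ‖_F μ(dΘ) < ∞. Assume that the population objective u(c) = ∫ u(Θ, c) μ(dΘ) has a unique minimizer c* over the collection F of nonempty sets of R×L matrices of cardinality at most K, and that inf{u(c) : c ∈ F} < inf{u(c) : c ∈ F, card(c) < K}. Let (M_n) be an increasing sequence of convex compact subsets of ℝ^{R×L} with ∪_n M_n = ℝ^{R×L}, and for each n let cⁿ be a set of cardinality at most K contained in M_n that minimizes the empirical objective u_n(c) = (1/n) Σ_{i=1}^n u(Θⁱ, c) over all such sets. Then, almost surely, cⁿ converges to c* in the Hausdorff metric. -/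
open MeasureTheory ProbabilityTheory Filter Metric

/-- `u(Θ, c) = min_{a ∈ c} ‖Θ − a‖_F`, where the space of R×L real matrices with the
Frobenius norm is modeled as `EuclideanSpace ℝ (Fin R × Fin L)`. -/
noncomputable def uPt {E : Type*} [NormedAddCommGroup E] (Θ : E) (c : Finset E)
    (hc : c.Nonempty) : ℝ :=
  c.inf' hc fun a => ‖Θ - a‖

set_option maxHeartbeats 1000000

noncomputable def uC {E : Type*} [NormedAddCommGroup E] (θ : E) (c : Finset E) : ℝ :=
  if hc : c.Nonempty then uPt θ c hc else 0

noncomputable def gTail {E : Type*} [NormedAddCommGroup E] (T : ℕ) (θ : E) : ℝ :=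
  if (T : ℝ) ≤ ‖θ‖ then ‖θ‖ else 0

lemma uC_singleton {E : Type*} [NormedAddCommGroup E] {θ a : E} : uC θ {a} = ‖θ - a‖ := by
  rw [show uC θ {a} = uPt θ {a} ⟨a, Finset.mem_singleton_self a⟩ from dif_pos _]
  simp only [uPt, Finset.inf'_singleton]

section Aux
variable {E : Type*} [NormedAddCommGroup E] {θ θ' : E} {c c' : Finset E}

lemma uC_eq (hc : c.Nonempty) : uC θ c = uPt θ c hc := dif_pos hc

lemma uC_nonneg : 0 ≤ uC θ c := by
  by_cases hc : c.Nonempty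
  · rw [uC_eq hc]; exact Finset.le_inf' hc _ fun _ _ => norm_nonneg _
  · rw [uC, dif_neg hc]

lemma uC_le (hc : c.Nonempty) {a : E} (ha : a ∈ c) : uC θ c ≤ ‖θ - a‖ := by
  rw [uC_eq hc]; exact Finset.inf'_le _ ha

lemma exists_uC_eq (hc : c.Nonempty) : ∃ a ∈ c, uC θ c = ‖θ - a‖ := by
  rw [uC_eq hc]; exact Finset.exists_mem_eq_inf' hc _

lemma uC_anti (hc : c.Nonempty) (h : c ⊆ c') : uC θ c' ≤ uC θ c := by
  obtain ⟨a, ha, hae⟩ := exists_uC_eq (θ := θ) hc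
  rw [hae]; exact uC_le (hc.mono h) (h ha)

lemma uC_le_add (hc : c.Nonempty) (hc' : c'.Nonempty) {r : ℝ}
    (h : ∀ a ∈ c, ∃ b ∈ c', ‖a - b‖ ≤ r) :
    uC θ c' ≤ uC θ c + r := by
  obtain ⟨a, ha, hae⟩ := exists_uC_eq (θ := θ) hc
  obtain ⟨b, hb, hab⟩ := h a ha
  calc uC θ c' ≤ ‖θ - b‖ := uC_le hc' hb
    _ ≤ ‖θ - a‖ + ‖a - b‖ := by
        have := norm_add_le (θ - a) (a - b); simpa using this
    _ ≤ uC θ c + r := by rw [hae]; exact add_le_add le_rfl hab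

lemma uC_lipschitz (hc : c.Nonempty) : |uC θ c - uC θ' c| ≤ ‖θ - θ'‖ := by
  rw [abs_sub_le_iff]
  constructor
  · obtain ⟨a, ha, hae⟩ := exists_uC_eq (θ := θ') hc
    calc uC θ c - uC θ' c ≤ ‖θ - a‖ - ‖θ' - a‖ := by
          rw [hae]; exact sub_le_sub_right (uC_le hc ha) _
      _ ≤ ‖θ - θ'‖ := by
          have := norm_sub_norm_le (θ - a) (θ' - a); simpa using this
  · obtain ⟨a, ha, hae⟩ := exists_uC_eq (θ := θ) hc
    calc uC θ' c - uC θ c ≤ ‖θ' - a‖ - ‖θ - a‖ := by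
          rw [hae]; exact sub_le_sub_right (uC_le hc ha) _
      _ ≤ ‖θ - θ'‖ := by
          have := norm_sub_norm_le (θ' - a) (θ - a)
          simp only [sub_sub_sub_cancel_right] at this
          rw [← norm_neg (θ - θ')]; simpa using this

lemma uC_le_norm_add (hc : c.Nonempty) {a : E} (ha : a ∈ c) :
    uC θ c ≤ ‖θ‖ + ‖a‖ :=
  (uC_le hc ha).trans (norm_sub_le _ _)

lemma continuous_uC : Continuous fun θ : E => uC θ c := by
  by_cases hc : c.Nonempty
  · have : LipschitzWith 1 fun θ : E => uC θ c := by
      apply LipschitzWith.of_dist_le_mul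
      intro x y
      rw [Real.dist_eq, dist_eq_norm]
      simpa using uC_lipschitz (θ := x) (θ' := y) hc
    exact this.continuous
  · simp only [uC, dif_neg hc]; exact continuous_const

/-- Every nonempty finset of card ≤ K is the image of a K-tuple with entries in it. -/
lemma finset_eq_image [DecidableEq E] {K : ℕ} (hK : 0 < K) (c : Finset E) (hc : c.Nonempty)
    (hcard : c.card ≤ K) :
    ∃ x : Fin K → E, (∀ i, x i ∈ c) ∧ Finset.image x Finset.univ = c := by
  have hpos : 0 < c.card := Finset.card_pos.mpr hc
  let e := c.equivFin
  refine ⟨fun i => (e.symm ⟨min i (c.card - 1), by omega⟩ : c), fun i => (e.symm _).2, ?_⟩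
  apply Finset.Subset.antisymm
  · intro a ha
    rw [Finset.mem_image] at ha
    obtain ⟨i, _, rfl⟩ := ha
    exact (e.symm _).2
  · intro a ha
    rw [Finset.mem_image]
    refine ⟨⟨(e ⟨a, ha⟩ : Fin c.card), by omega⟩, Finset.mem_univ _, ?_⟩
    have h1 : min ((e ⟨a, ha⟩ : Fin c.card) : ℕ) (c.card - 1) = (e ⟨a, ha⟩ : Fin c.card) := by
      have := (e ⟨a, ha⟩).2; omega
    simp only [h1]
    have : (⟨(e ⟨a, ha⟩ : Fin c.card), (e ⟨a, ha⟩).2⟩ : Fin c.card) = e ⟨a, ha⟩ := rfl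
    rw [this, Equiv.symm_apply_apply]

end Aux


lemma slln_comp {Ω : Type*} [MeasurableSpace Ω] {P : Measure Ω} [IsProbabilityMeasure P]
    {E : Type*} [MeasurableSpace E] {μ : Measure E} (Θ : ℕ → Ω → E)
    (hmeas : ∀ i, Measurable (Θ i))
    (hindep : ProbabilityTheory.iIndepFun Θ P)
    (hlaw : ∀ i, Measure.map (Θ i) P = μ)
    (f : E → ℝ) (hf : Measurable f) (hfint : Integrable f μ) :
    ∀ᵐ ω ∂P, Tendsto (fun n => (∑ i ∈ Finset.range n, f (Θ i ω)) / n) atTop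
      (nhds (∫ x, f x ∂μ)) := by
  have hXint : Integrable (fun ω => f (Θ 0 ω)) P := by
    have h1 : Integrable f (Measure.map (Θ 0) P) := by rw [hlaw 0]; exact hfint
    exact (integrable_map_measure h1.aestronglyMeasurable (hmeas 0).aemeasurable).mp h1
  have hpair : Pairwise (Function.onFun (ProbabilityTheory.IndepFun · · P) fun i ω => f (Θ i ω)) := by
    intro i j hij
    exact (hindep.indepFun hij).comp hf hf
  have hident : ∀ i, ProbabilityTheory.IdentDistrib (fun ω => f (Θ i ω))
      (fun ω => f (Θ 0 ω)) P P := by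
    intro i
    refine ⟨(hf.comp (hmeas i)).aemeasurable, (hf.comp (hmeas 0)).aemeasurable, ?_⟩
    have hi : (fun ω => f (Θ i ω)) = f ∘ Θ i := rfl
    rw [hi, ← Measure.map_map hf (hmeas i), hlaw i,
      show (fun ω => f (Θ 0 ω)) = f ∘ Θ 0 from rfl, ← Measure.map_map hf (hmeas 0), hlaw 0]
  have hE : (∫ ω, f (Θ 0 ω) ∂P) = ∫ x, f x ∂μ := by
    rw [← hlaw 0, integral_map (hmeas 0).aemeasurable]
    rw [hlaw 0]; exact hfint.aestronglyMeasurable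
  have := strong_law_ae_real (fun i ω => f (Θ i ω)) hXint hpair hident
  rw [hE] at this
  exact this


section Int
variable {E : Type*} [NormedAddCommGroup E] [MeasurableSpace E] [OpensMeasurableSpace E]
  {μ : Measure E} [IsProbabilityMeasure μ]

lemma integrable_uC (hint : Integrable (fun θ : E => ‖θ‖) μ) (c : Finset E)
    (hc : c.Nonempty) : Integrable (fun θ => uC θ c) μ := by
  obtain ⟨a, ha⟩ := hc
  refine Integrable.mono' (hint.add (integrable_const ‖a‖)) ?_ ?_
  · exact continuous_uC.aestronglyMeasurable
  · filter_upwards with θ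
    rw [Real.norm_eq_abs, abs_of_nonneg uC_nonneg]
    exact uC_le_norm_add ⟨a, ha⟩ ha

lemma integral_uC_le_add (hint : Integrable (fun θ : E => ‖θ‖) μ)
    {c c' : Finset E} (hc : c.Nonempty) (hc' : c'.Nonempty) {r : ℝ}
    (h : ∀ a ∈ c, ∃ b ∈ c', ‖a - b‖ ≤ r) :
    (∫ θ, uC θ c' ∂μ) ≤ (∫ θ, uC θ c ∂μ) + r := by
  have h1 : (∫ θ, uC θ c' ∂μ) ≤ ∫ θ, uC θ c + r ∂μ := by
    refine integral_mono (integrable_uC hint c' hc') ((integrable_uC hint c hc).add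
      (integrable_const r)) ?_
    intro θ; exact uC_le_add hc hc' h
  rwa [integral_add (integrable_uC hint c hc) (integrable_const r),
    integral_const, probReal_univ, one_smul] at h1

end Int

section Net
variable {E : Type*} [NormedAddCommGroup E] [NormedSpace ℝ E] [FiniteDimensional ℝ E]

/-- A finite δ-net for a closed ball. -/
lemma exists_net (r δ : ℝ) (hδ : 0 < δ) :
    ∃ t : Finset E, t.Nonempty ∧ ∀ p ∈ closedBall (0 : E) r, ∃ a ∈ t, dist p a ≤ δ := by
  classical
  obtain ⟨s, hs_sub, hs_fin, hs_cover⟩ :=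
    (isCompact_closedBall (0 : E) r).finite_cover_balls hδ
  refine ⟨insert 0 hs_fin.toFinset, ⟨0, Finset.mem_insert_self _ _⟩, ?_⟩
  intro p hp
  obtain ⟨a, ha, hpa⟩ := Set.mem_iUnion₂.mp (hs_cover hp)
  exact ⟨a, Finset.mem_insert_of_mem (hs_fin.mem_toFinset.mpr ha), (mem_ball.mp hpa).le⟩

end Net

section Tail
variable {E : Type*} [NormedAddCommGroup E] [MeasurableSpace E] [OpensMeasurableSpace E]
  {μ : Measure E} [IsProbabilityMeasure μ]

lemma measurable_gTail {T : ℕ} : Measurable (gTail (E := E) T) := by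
  apply Measurable.ite (measurableSet_le measurable_const measurable_norm)
    measurable_norm measurable_const

lemma integrable_gTail (hint : Integrable (fun θ : E => ‖θ‖) μ) (T : ℕ) :
    Integrable (gTail T) μ := by
  refine Integrable.mono' hint measurable_gTail.aestronglyMeasurable ?_
  filter_upwards with θ
  rw [Real.norm_eq_abs, gTail]
  split <;> simp [abs_of_nonneg, norm_nonneg]

lemma tendsto_integral_gTail (hint : Integrable (fun θ : E => ‖θ‖) μ) :
    Tendsto (fun T : ℕ => ∫ θ, gTail T θ ∂μ) atTop (nhds 0) := by
  have h0 : (0 : ℝ) = ∫ θ : E, (0 : ℝ) ∂μ := by simp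
  rw [h0]
  apply tendsto_integral_of_dominated_convergence (fun θ => ‖θ‖)
    (fun T => measurable_gTail.aestronglyMeasurable) hint
  · intro T
    filter_upwards with θ
    rw [Real.norm_eq_abs, gTail]
    split <;> simp [abs_of_nonneg, norm_nonneg]
  · filter_upwards with θ
    have hev : ∀ᶠ T : ℕ in atTop, gTail T θ = 0 := by
      filter_upwards [eventually_gt_atTop ⌈‖θ‖⌉₊] with T hT
      rw [gTail, if_neg]
      push_neg
      calc ‖θ‖ ≤ (⌈‖θ‖⌉₊ : ℝ) := Nat.le_ceil _
        _ < T := by exact_mod_cast hT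
    exact Tendsto.congr' (hev.mono fun T h => h.symm) tendsto_const_nhds

end Tail


theorem det_main {E : Type*} [NormedAddCommGroup E] [NormedSpace ℝ E] [FiniteDimensional ℝ E]
    [MeasurableSpace E] [BorelSpace E]
    (K : ℕ) (hK : 0 < K)
    (μ : Measure E) [IsProbabilityMeasure μ]
    (hint : Integrable (fun θ : E => ‖θ‖) μ)
    (cstar : Finset E) (hcstar_ne : cstar.Nonempty) (hcstar_card : cstar.card ≤ K)
    (hmin : ∀ c : Finset E, c.Nonempty → c.card ≤ K →
      (∫ x, uC x cstar ∂μ) ≤ ∫ x, uC x c ∂μ)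
    (huniq : ∀ c : Finset E, c.Nonempty → c.card ≤ K →
      (∀ c' : Finset E, c'.Nonempty → c'.card ≤ K →
        (∫ x, uC x c ∂μ) ≤ ∫ x, uC x c' ∂μ) → c = cstar)
    (hsep : (∫ x, uC x cstar ∂μ) <
      sInf {x : ℝ | ∃ c : Finset E, c.Nonempty ∧ c.card < K ∧ x = ∫ y, uC y c ∂μ})
    (M : ℕ → Set E) (hMmono : Monotone M) (hMcover : (⋃ n, M n) = Set.univ)
    (θ : ℕ → E)
    (cn : ℕ → Finset E)
    (hcn_ne : ∀ n, (cn n).Nonempty)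
    (hcn_card : ∀ n, (cn n).card ≤ K)
    (hcn_sub : ∀ n, ↑(cn n) ⊆ M n)
    (hcn_min : ∀ n (c : Finset E), c.Nonempty → c.card ≤ K → ↑c ⊆ M n →
      (∑ i ∈ Finset.range n, uC (θ i) (cn n)) / n ≤ (∑ i ∈ Finset.range n, uC (θ i) c) / n)
    (Hnet : ∀ m q : ℕ, ∃ t : Finset E,
      (∀ p ∈ closedBall (0 : E) m, ∃ a ∈ t, dist p a ≤ 1 / (q + 1)) ∧
      ∀ c ∈ t.powerset, c.Nonempty →
        Tendsto (fun n => (∑ i ∈ Finset.range n, uC (θ i) c) / n) atTop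
          (nhds (∫ x, uC x c ∂μ)))
    (Hcstar : Tendsto (fun n => (∑ i ∈ Finset.range n, uC (θ i) cstar) / n) atTop
      (nhds (∫ x, uC x cstar ∂μ)))
    (Htail : ∀ T : ℕ, Tendsto (fun n => (∑ i ∈ Finset.range n, gTail T (θ i)) / n) atTop
      (nhds (∫ x, gTail T x ∂μ)))
    (Hball : ∀ ρ : ℕ, Tendsto (fun n => (∑ i ∈ Finset.range n,
        (Metric.ball (0 : E) ρ).indicator (fun _ => (1 : ℝ)) (θ i)) / n) atTop
      (nhds (μ (Metric.ball (0 : E) ρ)).toReal))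
    (Hnorm : Tendsto (fun n => (∑ i ∈ Finset.range n, ‖θ i‖) / n) atTop
      (nhds (∫ x, ‖x‖ ∂μ))) :
    Tendsto (fun n => hausdorffDist (↑(cn n) : Set E) ↑cstar) atTop (nhds 0) := by
  classical
  set ustar : ℝ := ∫ x, uC x cstar ∂μ with hustar
  set m' : ℝ := sInf {x : ℝ | ∃ c : Finset E, c.Nonempty ∧ c.card < K ∧ x = ∫ y, uC y c ∂μ}
    with hm'
  set W : Finset E → ℝ := fun c => ∫ x, uC x c ∂μ with hW
  set U : ℕ → Finset E → ℝ := fun n c => (∑ i ∈ Finset.range n, uC (θ i) c) / n with hU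
  -- basic facts
  have hW0 : ∀ c : Finset E, 0 ≤ W c := fun c => integral_nonneg fun x => uC_nonneg
  have hF1 : ∀ c : Finset E, c.Nonempty → c.card < K → m' ≤ W c := by
    intro c hc hcard
    exact csInf_le ⟨0, fun x ⟨d, hd, hdc, hx⟩ => hx ▸ hW0 d⟩ ⟨c, hc, hcard, rfl⟩
  have hF2 : ∀ c : Finset E, ∃ m, ∀ n ≥ m, ↑c ⊆ M n := by
    intro c
    have hx : ∀ a : E, ∃ m, a ∈ M m := by
      intro a
      have : a ∈ ⋃ n, M n := hMcover ▸ Set.mem_univ a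
      exact Set.mem_iUnion.mp this
    choose f hf using hx
    refine ⟨c.sup f, fun n hn a ha => ?_⟩
    exact hMmono (le_trans (Finset.le_sup (Finset.mem_coe.mp ha)) hn) (hf a)
  -- the base point
  obtain ⟨x0, hx00⟩ := hcn_ne 0
  have hx0M : ∀ n, x0 ∈ M n := fun n => hMmono (Nat.zero_le n) (hcn_sub 0 hx00)
  -- upper bound on the empirical minimum
  set I1 : ℝ := ∫ x, ‖x‖ ∂μ with hI1
  set V : ℝ := I1 + ‖x0‖ + 1 with hV
  have hVpos : 0 < V := by
    have : 0 ≤ I1 := integral_nonneg fun x => norm_nonneg x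
    have := norm_nonneg x0; linarith
  have hUcn_le : ∀ n (c : Finset E), c.Nonempty → c.card ≤ K → ↑c ⊆ M n →
      U n (cn n) ≤ U n c := fun n c h1 h2 h3 => hcn_min n c h1 h2 h3
  have hF4 : ∀ᶠ n in atTop, U n (cn n) < V := by
    have h1 : ∀ᶠ n in atTop, (∑ i ∈ Finset.range n, ‖θ i‖) / n < I1 + 1 :=
      Hnorm.eventually_lt_const (by linarith)
    filter_upwards [h1, eventually_ge_atTop 1] with n hn hn1
    have hnpos : (0:ℝ) < n := by exact_mod_cast hn1
    have h2 : U n (cn n) ≤ U n {x0} := by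
      refine hUcn_le n {x0} ⟨x0, Finset.mem_singleton_self x0⟩ (by simp; omega) ?_
      intro a ha
      rw [Finset.coe_singleton, Set.mem_singleton_iff] at ha
      exact ha ▸ hx0M n
    have h3 : U n {x0} ≤ (∑ i ∈ Finset.range n, ‖θ i‖) / n + ‖x0‖ := by
      have hc1 : U n {x0} = (∑ i ∈ Finset.range n, ‖θ i - x0‖) / n := by
        simp only [hU, uC_singleton]
      rw [hc1]
      have hc2 : (∑ i ∈ Finset.range n, ‖θ i - x0‖) ≤
          ∑ i ∈ Finset.range n, (‖θ i‖ + ‖x0‖) :=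
        Finset.sum_le_sum fun i _ => norm_sub_le _ _
      have hc3 : (∑ i ∈ Finset.range n, (‖θ i‖ + ‖x0‖)) / n =
          (∑ i ∈ Finset.range n, ‖θ i‖) / n + ‖x0‖ := by
        rw [Finset.sum_add_distrib, add_div, Finset.sum_const, Finset.card_range,
          nsmul_eq_mul]
        congr 1
        field_simp
      rw [← hc3]
      gcongr
    simp only [hV]
    linarith
  -- Step B: a center in a fixed ball, eventually
  obtain ⟨ρ, hρ⟩ : ∃ ρ : ℕ, (1:ℝ)/2 < (μ (Metric.ball (0 : E) ρ)).toReal := by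
    have hmono : Monotone fun ρ : ℕ => Metric.ball (0 : E) ρ := by
      intro i j hij
      exact Metric.ball_subset_ball (by exact_mod_cast hij)
    have h1 := tendsto_measure_iUnion_atTop (μ := μ) hmono
    rw [Metric.iUnion_ball_nat, measure_univ] at h1
    have h2 : Tendsto (fun ρ : ℕ => (μ (Metric.ball (0 : E) ρ)).toReal) atTop
        (nhds (1 : ENNReal).toReal) := (ENNReal.tendsto_toReal ENNReal.one_ne_top).comp h1
    rw [ENNReal.toReal_one] at h2
    exact (h2.eventually_const_lt (by norm_num)).exists
  set R1 : ℕ := ρ + ⌈2 * V⌉₊ + 1 with hR1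
  have hFB : ∀ᶠ n in atTop, ∃ a ∈ cn n, ‖a‖ ≤ (R1 : ℝ) := by
    have hhalf : ∀ᶠ n in atTop, (1:ℝ)/2 < (∑ i ∈ Finset.range n,
        (Metric.ball (0 : E) ρ).indicator (fun _ => (1:ℝ)) (θ i)) / n :=
      (Hball ρ).eventually_const_lt hρ
    filter_upwards [hF4, hhalf] with n h4 hB
    by_contra hcon
    push_neg at hcon
    have key : ∀ i, ((R1:ℝ) - ρ) * (Metric.ball (0:E) ρ).indicator (fun _ => (1:ℝ)) (θ i)
        ≤ uC (θ i) (cn n) := by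
      intro i
      by_cases hi : θ i ∈ Metric.ball (0:E) ρ
      · rw [Set.indicator_of_mem hi, mul_one]
        obtain ⟨a, ha, hae⟩ := exists_uC_eq (θ := θ i) (hcn_ne n)
        have h5 : (R1:ℝ) < ‖a‖ := hcon a ha
        have h6 : ‖θ i‖ < ρ := by simpa [Metric.mem_ball, dist_zero_right] using hi
        rw [hae]
        have h7 : ‖a‖ - ‖θ i‖ ≤ ‖θ i - a‖ := by
          rw [norm_sub_rev]
          exact norm_sub_norm_le _ _
        linarith
      · rw [Set.indicator_of_notMem hi, mul_zero]
        exact uC_nonneg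
    have hsum : ((R1:ℝ) - ρ) * ((∑ i ∈ Finset.range n,
        (Metric.ball (0:E) ρ).indicator (fun _ => (1:ℝ)) (θ i)) / n) ≤ U n (cn n) := by
      rw [mul_div_assoc']
      have h8 : ((R1:ℝ) - ρ) * (∑ i ∈ Finset.range n,
          (Metric.ball (0:E) ρ).indicator (fun _ => (1:ℝ)) (θ i)) ≤
          ∑ i ∈ Finset.range n, uC (θ i) (cn n) := by
        rw [Finset.mul_sum]
        exact Finset.sum_le_sum fun i _ => key i
      simp only [hU]
      gcongr
    have hR1ρ : 2 * V + 1 ≤ (R1:ℝ) - ρ := by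
      simp only [hR1]
      push_cast
      have := Nat.le_ceil (2 * V)
      linarith
    have hBpos : (0:ℝ) < (∑ i ∈ Finset.range n,
        (Metric.ball (0:E) ρ).indicator (fun _ => (1:ℝ)) (θ i)) / n := by linarith
    nlinarith [hsum, h4, hB, hR1ρ, hVpos]
  -- Step C: quantities
  set ε : ℝ := (m' - ustar) / 4 with hε
  have hεpos : 0 < ε := by simp only [hε]; linarith [hsep]
  obtain ⟨T, hT1, hT2⟩ : ∃ T : ℕ, 1 ≤ T ∧ ((R1 : ℝ) + 1) * (∫ x, gTail T x ∂μ) < ε := by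
    have h1 : Tendsto (fun T : ℕ => ((R1 : ℝ) + 1) * ∫ x, gTail T x ∂μ) atTop
        (nhds (((R1 : ℝ) + 1) * 0)) := (tendsto_integral_gTail hint).const_mul _
    rw [mul_zero] at h1
    exact ((eventually_ge_atTop 1).and (h1.eventually_lt_const hεpos)).exists
  set Cmax : ℝ := cstar.sup' hcstar_ne fun a => ‖a‖ with hCmax
  set Rstar : ℕ := 2 * T + R1 + 1 + ⌈Cmax⌉₊ with hRstar
  have hRstar1 : (2 * T + R1 + 1 : ℝ) ≤ (Rstar : ℝ) := by
    simp only [hRstar]; push_cast; linarith [Nat.cast_nonneg (α := ℝ) ⌈Cmax⌉₊]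
  have hRstarR1 : (R1 : ℝ) ≤ (Rstar : ℝ) := by
    have : (T:ℝ) ≥ 1 := by exact_mod_cast hT1
    linarith
  have hcstar_sub : ↑cstar ⊆ closedBall (0 : E) Rstar := by
    intro a ha
    rw [mem_closedBall, dist_zero_right]
    have h1 : ‖a‖ ≤ Cmax := Finset.le_sup' _ ha
    have h2 : Cmax ≤ (⌈Cmax⌉₊ : ℝ) := Nat.le_ceil _
    have : ((⌈Cmax⌉₊ : ℕ) : ℝ) ≤ (Rstar : ℝ) := by exact_mod_cast Nat.le_add_left _ _
    linarith
  obtain ⟨q, hq⟩ := exists_nat_one_div_lt hεpos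
  set δ : ℝ := 1 / ((q : ℝ) + 1) with hδ
  have hδpos : 0 < δ := by positivity
  obtain ⟨t, htnet, htconv⟩ := Hnet Rstar q
  set π : E → E := fun p => if h : ∃ a ∈ t, dist p a ≤ δ then h.choose else p with hπdef
  have hπ : ∀ p ∈ closedBall (0 : E) Rstar, π p ∈ t ∧ dist p (π p) ≤ δ := by
    intro p hp
    obtain ⟨a, ha, hpa⟩ := htnet p hp
    have hex : ∃ a ∈ t, dist p a ≤ δ := ⟨a, ha, hpa⟩
    simp only [hπdef, dif_pos hex]
    exact ⟨hex.choose_spec.1, hex.choose_spec.2⟩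
  have hFerr : ∀ᶠ n in atTop, ∀ d ∈ t.powerset, d.Nonempty → |U n d - W d| < ε := by
    rw [eventually_all_finset]
    intro d hd
    by_cases hdne : d.Nonempty
    · have h := htconv d hd hdne
      have h2 : ∀ᶠ n in atTop, dist (U n d) (W d) < ε := by
        obtain ⟨N, hN⟩ := Metric.tendsto_atTop.mp h ε hεpos
        exact eventually_atTop.mpr ⟨N, fun n hn => hN n hn⟩
      filter_upwards [h2] with n hn _
      rwa [Real.dist_eq] at hn
    · filter_upwards with n hcon
      exact absurd hcon hdne
  -- Step D: eventually all centers are in the ball of radius Rstar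
  obtain ⟨m0, hm0⟩ := hF2 cstar
  have hFD : ∀ᶠ n in atTop, ∀ b ∈ cn n, ‖b‖ ≤ (Rstar : ℝ) := by
    have htail_ev : ∀ᶠ n in atTop, ((R1:ℝ)+1) * ((∑ i ∈ Finset.range n, gTail T (θ i)) / n)
        < ε := by
      have h1 : Tendsto (fun n => ((R1:ℝ)+1) * ((∑ i ∈ Finset.range n, gTail T (θ i)) / n))
          atTop (nhds (((R1:ℝ)+1) * ∫ x, gTail T x ∂μ)) := (Htail T).const_mul _
      exact h1.eventually_lt_const hT2
    have hcstar_ev : ∀ᶠ n in atTop, U n cstar < ustar + ε :=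
      Hcstar.eventually_lt_const (by linarith)
    filter_upwards [hFB, hFerr, hcstar_ev, htail_ev, eventually_ge_atTop m0,
      eventually_ge_atTop 1] with n ha hferr hUcst htail hnm0 hn1
    obtain ⟨a1, ha1mem, ha1⟩ := ha
    by_contra hcon
    push_neg at hcon
    obtain ⟨b, hbmem, hb⟩ := hcon
    set c' : Finset E := (cn n).filter (fun a => ‖a‖ ≤ (Rstar:ℝ)) with hc'def
    have ha1c' : a1 ∈ c' := Finset.mem_filter.mpr ⟨ha1mem, ha1.trans hRstarR1⟩
    have hc'ne : c'.Nonempty := ⟨a1, ha1c'⟩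
    have hc'sub : c' ⊆ cn n := Finset.filter_subset _ _
    have hbnot : b ∉ c' := by
      intro h
      exact absurd (Finset.mem_filter.mp h).2 (not_le.mpr hb)
    have hc'card : c'.card < K := by
      have h1 : c' ⊆ (cn n).erase b := by
        intro x hx
        exact Finset.mem_erase.mpr ⟨fun he => hbnot (he ▸ hx), hc'sub hx⟩
      have h2 := Finset.card_le_card h1
      rw [Finset.card_erase_of_mem hbmem] at h2
      have h3 := hcn_card n
      have h4 : 0 < (cn n).card := Finset.card_pos.mpr (hcn_ne n)
      omega
    have hc'ball : ∀ a ∈ c', a ∈ closedBall (0:E) Rstar := by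
      intro a haa
      rw [mem_closedBall, dist_zero_right]
      exact (Finset.mem_filter.mp haa).2
    -- pointwise comparison
    have key : ∀ i : ℕ, uC (θ i) c' ≤ uC (θ i) (cn n) + ((R1:ℝ)+1) * gTail T (θ i) := by
      intro i
      set x := θ i with hx
      have hgnn : 0 ≤ gTail T x := by
        rw [gTail]; split
        · exact norm_nonneg _
        · exact le_refl 0
      have hR1nn : (0:ℝ) ≤ (R1:ℝ) := Nat.cast_nonneg _
      obtain ⟨bm, hbm, hbme⟩ := exists_uC_eq (θ := x) (hcn_ne n)
      by_cases hbmR : ‖bm‖ ≤ (Rstar:ℝ)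
      · have hbmc' : bm ∈ c' := Finset.mem_filter.mpr ⟨hbm, hbmR⟩
        have h5 : uC x c' ≤ ‖x - bm‖ := uC_le hc'ne hbmc'
        rw [← hbme] at h5
        have h6 : (0:ℝ) ≤ ((R1:ℝ)+1) * gTail T x :=
          mul_nonneg (by linarith) hgnn
        linarith
      · push_neg at hbmR
        have hxa1 : uC x (cn n) ≤ ‖x‖ + (R1:ℝ) :=
          le_trans (uC_le_norm_add (hcn_ne n) ha1mem) (by linarith)
        have hT' : (1:ℝ) ≤ (T:ℝ) := by exact_mod_cast hT1
        by_cases hxT : ‖x‖ < (T:ℝ)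
        · exfalso
          have h9 : ‖bm‖ - ‖x‖ ≤ ‖x - bm‖ := by
            rw [norm_sub_rev]; exact norm_sub_norm_le _ _
          rw [hbme] at hxa1
          linarith [hRstar1]
        · push_neg at hxT
          have hgx : gTail T x = ‖x‖ := if_pos hxT
          have h10 : uC x c' ≤ ‖x‖ + (R1:ℝ) :=
            le_trans (uC_le_norm_add hc'ne ha1c') (by linarith)
          have h11 : ‖x‖ + (R1:ℝ) ≤ ((R1:ℝ)+1) * ‖x‖ := by
            have hx1 : (1:ℝ) ≤ ‖x‖ := le_trans hT' hxT
            have := mul_le_mul_of_nonneg_left hx1 hR1nn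
            nlinarith
          have h12 : (0:ℝ) ≤ uC x (cn n) := uC_nonneg
          rw [hgx]
          linarith
    -- summed comparison
    have hnpos : (0:ℝ) < n := by exact_mod_cast hn1
    have hsumD : U n c' ≤ U n (cn n) + ((R1:ℝ)+1) *
        ((∑ i ∈ Finset.range n, gTail T (θ i)) / n) := by
      have h1 : (∑ i ∈ Finset.range n, uC (θ i) c') ≤
          ∑ i ∈ Finset.range n, (uC (θ i) (cn n) + ((R1:ℝ)+1) * gTail T (θ i)) :=
        Finset.sum_le_sum fun i _ => key i
      rw [Finset.sum_add_distrib, ← Finset.mul_sum] at h1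
      calc U n c' = (∑ i ∈ Finset.range n, uC (θ i) c') / n := rfl
        _ ≤ ((∑ i ∈ Finset.range n, uC (θ i) (cn n)) +
            ((R1:ℝ)+1) * ∑ i ∈ Finset.range n, gTail T (θ i)) / n := by gcongr
        _ = U n (cn n) + ((R1:ℝ)+1) *
            ((∑ i ∈ Finset.range n, gTail T (θ i)) / n) := by
          rw [add_div, mul_div_assoc]
    -- project to the net
    set c2 : Finset E := c'.image π with hc2def
    have hc2sub : c2 ⊆ t := by
      intro y hy
      rw [hc2def, Finset.mem_image] at hy
      obtain ⟨a, hac', rfl⟩ := hy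
      exact (hπ a (hc'ball a hac')).1
    have hc2ne : c2.Nonempty := ⟨π a1, Finset.mem_image_of_mem _ ha1c'⟩
    have hc2card : c2.card < K := lt_of_le_of_lt Finset.card_image_le hc'card
    have hUc2 : U n c2 ≤ U n c' + δ := by
      have h1 : ∀ i : ℕ, uC (θ i) c2 ≤ uC (θ i) c' + δ := by
        intro i
        refine uC_le_add hc'ne hc2ne ?_
        intro a hac'
        refine ⟨π a, Finset.mem_image_of_mem _ hac', ?_⟩
        rw [← dist_eq_norm]
        exact (hπ a (hc'ball a hac')).2
      have h2 : (∑ i ∈ Finset.range n, uC (θ i) c2) ≤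
          ∑ i ∈ Finset.range n, (uC (θ i) c' + δ) :=
        Finset.sum_le_sum fun i _ => h1 i
      rw [Finset.sum_add_distrib, Finset.sum_const, Finset.card_range, nsmul_eq_mul] at h2
      have h3 : U n c2 ≤ ((∑ i ∈ Finset.range n, uC (θ i) c') + (n:ℝ) * δ) / n := by
        simp only [hU]
        gcongr
      rw [add_div, mul_div_cancel_left₀ δ (ne_of_gt hnpos)] at h3
      exact h3
    have herr := hferr c2 (Finset.mem_powerset.mpr hc2sub) hc2ne
    have hm'le : m' ≤ W c2 := hF1 c2 hc2ne hc2card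
    have hUcstar : U n (cn n) ≤ U n cstar :=
      hUcn_le n cstar hcstar_ne hcstar_card (hm0 n hnm0)
    have habs := (abs_sub_lt_iff.mp herr).2
    linarith [habs, hm'le, hUc2, hsumD, htail, hUcstar, hUcst, hq]
  -- Step E: the population objective of the empirical minimizers converges
  have hFE : ∀ ε1 : ℝ, 0 < ε1 → ∀ᶠ n in atTop, W (cn n) < ustar + ε1 := by
    intro ε1 hε1
    obtain ⟨q1, hq1⟩ := exists_nat_one_div_lt (show (0:ℝ) < ε1/4 by linarith)
    set δ1 : ℝ := 1 / ((q1:ℝ) + 1) with hδ1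
    have hδ1pos : 0 < δ1 := by positivity
    obtain ⟨t1, ht1net, ht1conv⟩ := Hnet Rstar q1
    set π1 : E → E := fun p => if h : ∃ a ∈ t1, dist p a ≤ δ1 then h.choose else p with hπ1def
    have hπ1 : ∀ p ∈ closedBall (0 : E) Rstar, π1 p ∈ t1 ∧ dist p (π1 p) ≤ δ1 := by
      intro p hp
      obtain ⟨a, ha, hpa⟩ := ht1net p hp
      have hex : ∃ a ∈ t1, dist p a ≤ δ1 := ⟨a, ha, hpa⟩
      simp only [hπ1def, dif_pos hex]
      exact ⟨hex.choose_spec.1, hex.choose_spec.2⟩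
    have herr1 : ∀ᶠ n in atTop, ∀ d ∈ t1.powerset, d.Nonempty → |U n d - W d| < ε1/4 := by
      rw [eventually_all_finset]
      intro d hd
      by_cases hdne : d.Nonempty
      · obtain ⟨N, hN⟩ := Metric.tendsto_atTop.mp (ht1conv d hd hdne) (ε1/4) (by linarith)
        refine eventually_atTop.mpr ⟨N, fun n hn _ => ?_⟩
        have := hN n hn
        rwa [Real.dist_eq] at this
      · filter_upwards with n hcon
        exact absurd hcon hdne
    have hcstar_ev : ∀ᶠ n in atTop, U n cstar < ustar + ε1/4 :=
      Hcstar.eventually_lt_const (by linarith)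
    filter_upwards [hFD, herr1, hcstar_ev, eventually_ge_atTop m0, eventually_ge_atTop 1]
      with n hball herr hUcst hnm0 hn1
    have hnpos : (0:ℝ) < n := by exact_mod_cast hn1
    have hcball : ∀ a ∈ cn n, a ∈ closedBall (0:E) Rstar := by
      intro a ha
      rw [mem_closedBall, dist_zero_right]
      exact hball a ha
    set c2 : Finset E := (cn n).image π1 with hc2def
    have hc2sub : c2 ⊆ t1 := by
      intro y hy
      rw [hc2def, Finset.mem_image] at hy
      obtain ⟨a, hac, rfl⟩ := hy
      exact (hπ1 a (hcball a hac)).1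
    obtain ⟨a1, ha1⟩ := hcn_ne n
    have hc2ne : c2.Nonempty := ⟨π1 a1, Finset.mem_image_of_mem _ ha1⟩
    have hWW : W (cn n) ≤ W c2 + δ1 := by
      refine integral_uC_le_add hint hc2ne (hcn_ne n) ?_
      intro a hac2
      rw [hc2def, Finset.mem_image] at hac2
      obtain ⟨b, hb, rfl⟩ := hac2
      refine ⟨b, hb, ?_⟩
      rw [← dist_eq_norm, dist_comm]
      exact (hπ1 b (hcball b hb)).2
    have hUc2 : U n c2 ≤ U n (cn n) + δ1 := by
      have h1 : ∀ i : ℕ, uC (θ i) c2 ≤ uC (θ i) (cn n) + δ1 := by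
        intro i
        refine uC_le_add (hcn_ne n) hc2ne ?_
        intro a hac
        refine ⟨π1 a, Finset.mem_image_of_mem _ hac, ?_⟩
        rw [← dist_eq_norm]
        exact (hπ1 a (hcball a hac)).2
      have h2 : (∑ i ∈ Finset.range n, uC (θ i) c2) ≤
          ∑ i ∈ Finset.range n, (uC (θ i) (cn n) + δ1) :=
        Finset.sum_le_sum fun i _ => h1 i
      rw [Finset.sum_add_distrib, Finset.sum_const, Finset.card_range, nsmul_eq_mul] at h2
      have h3 : U n c2 ≤ ((∑ i ∈ Finset.range n, uC (θ i) (cn n)) + (n:ℝ) * δ1) / n := by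
        simp only [hU]
        gcongr
      rw [add_div, mul_div_cancel_left₀ δ1 (ne_of_gt hnpos)] at h3
      exact h3
    have habs := (abs_sub_lt_iff.mp (herr c2 (Finset.mem_powerset.mpr hc2sub) hc2ne)).2
    have hUcn : U n (cn n) ≤ U n cstar :=
      hUcn_le n cstar hcstar_ne hcstar_card (hm0 n hnm0)
    linarith [hWW, habs, hUc2, hUcn, hUcst, hq1]
  -- Step F: geometric stability of the unique minimizer
  have hGF : ∀ ε2 : ℝ, 0 < ε2 → ∃ δ2 : ℝ, 0 < δ2 ∧ ∀ c : Finset E, c.Nonempty →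
      c.card ≤ K → ↑c ⊆ closedBall (0 : E) Rstar → W c < ustar + δ2 →
      hausdorffDist (↑c : Set E) ↑cstar < ε2 := by
    intro ε2 hε2
    by_contra hcon
    push_neg at hcon
    have hchoice : ∀ j : ℕ, ∃ c : Finset E, c.Nonempty ∧ c.card ≤ K ∧
        ↑c ⊆ closedBall (0:E) Rstar ∧ W c < ustar + 1/((j:ℝ)+1) ∧
        ε2 ≤ hausdorffDist (↑c : Set E) ↑cstar := by
      intro j
      obtain ⟨c, hc1, hc2, hc3, hc4, hc5⟩ := hcon (1/((j:ℝ)+1)) (by positivity)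
      exact ⟨c, hc1, hc2, hc3, hc4, hc5⟩
    choose cc h1 h2 h3 h4 h5 using hchoice
    choose xx hx1 hx2 using fun j => finset_eq_image hK (cc j) (h1 j) (h2 j)
    have hcompact : IsCompact (Set.pi Set.univ fun _ : Fin K =>
        closedBall (0:E) (Rstar:ℝ)) :=
      isCompact_univ_pi fun _ => isCompact_closedBall _ _
    have hxS : ∀ j, xx j ∈ Set.pi Set.univ fun _ : Fin K => closedBall (0:E) (Rstar:ℝ) := by
      intro j
      rw [Set.mem_univ_pi]
      intro i
      exact h3 j (Finset.mem_coe.mpr (hx1 j i))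
    obtain ⟨xinf, hxinfS, φ, hφmono, hφtend⟩ := hcompact.tendsto_subseq hxS
    set cinf : Finset E := Finset.image xinf Finset.univ with hcinf
    have hcinf_ne : cinf.Nonempty :=
      ⟨xinf ⟨0, hK⟩, Finset.mem_image_of_mem _ (Finset.mem_univ _)⟩
    have hcinf_card : cinf.card ≤ K := by
      calc cinf.card ≤ (Finset.univ : Finset (Fin K)).card := Finset.card_image_le
        _ = K := by simp
    set r : ℕ → ℝ := fun j => dist (xx (φ j)) xinf with hr
    have hrtend : Tendsto r atTop (nhds 0) := by
      have := tendsto_iff_dist_tendsto_zero.mp hφtend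
      simpa [hr] using this
    have hrnn : ∀ j, 0 ≤ r j := fun j => dist_nonneg
    have hW1 : ∀ j, W cinf ≤ W (cc (φ j)) + r j := by
      intro j
      refine integral_uC_le_add hint (h1 (φ j)) hcinf_ne ?_
      intro a ha
      rw [← hx2 (φ j), Finset.mem_image] at ha
      obtain ⟨i, _, rfl⟩ := ha
      refine ⟨xinf i, Finset.mem_image_of_mem _ (Finset.mem_univ _), ?_⟩
      rw [← dist_eq_norm]
      exact (dist_le_pi_dist (xx (φ j)) xinf i).trans (le_refl _)
    have hW2 : ∀ j, W cinf ≤ ustar + 1/(((φ j):ℝ)+1) + r j := by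
      intro j
      have := h4 (φ j)
      linarith [hW1 j]
    have hlim : Tendsto (fun j => ustar + 1/(((φ j):ℝ)+1) + r j) atTop
        (nhds (ustar + 0 + 0)) := by
      refine Tendsto.add (Tendsto.add tendsto_const_nhds ?_) hrtend
      have h6 : Tendsto (fun m : ℕ => 1/((m:ℝ)+1)) atTop (nhds 0) :=
        tendsto_one_div_add_atTop_nhds_zero_nat
      exact h6.comp hφmono.tendsto_atTop
    have hWle : W cinf ≤ ustar := by
      have := ge_of_tendsto hlim (Filter.Eventually.of_forall hW2)
      simpa using this
    have hcinf_min : ∀ c' : Finset E, c'.Nonempty → c'.card ≤ K → W cinf ≤ W c' :=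
      fun c' h1' h2' => le_trans hWle (hmin c' h1' h2')
    have hEQ : cinf = cstar := huniq cinf hcinf_ne hcinf_card hcinf_min
    have hhd : ∀ j, hausdorffDist (↑(cc (φ j)) : Set E) ↑cstar ≤ r j := by
      intro j
      rw [← hEQ]
      refine hausdorffDist_le_of_mem_dist (hrnn j) ?_ ?_
      · intro p hp
        rw [Finset.mem_coe, ← hx2 (φ j), Finset.mem_image] at hp
        obtain ⟨i, _, rfl⟩ := hp
        exact ⟨xinf i, Finset.mem_coe.mpr (Finset.mem_image_of_mem _ (Finset.mem_univ _)),
          dist_le_pi_dist (xx (φ j)) xinf i⟩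
      · intro p hp
        rw [Finset.mem_coe, hcinf, Finset.mem_image] at hp
        obtain ⟨i, _, rfl⟩ := hp
        refine ⟨xx (φ j) i, Finset.mem_coe.mpr ?_, ?_⟩
        · rw [← hx2 (φ j)]
          exact Finset.mem_image_of_mem _ (Finset.mem_univ _)
        · rw [dist_comm]
          exact dist_le_pi_dist (xx (φ j)) xinf i
    obtain ⟨j, hj⟩ := (hrtend.eventually_lt_const hε2).exists
    exact absurd (le_trans (h5 (φ j)) (hhd j)) (not_le.mpr hj)
  -- conclusion
  rw [Metric.tendsto_atTop]
  intro ε2 hε2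
  obtain ⟨δ2, hδ2pos, hδ2⟩ := hGF ε2 hε2
  have hev : ∀ᶠ n in atTop, dist (hausdorffDist (↑(cn n) : Set E) ↑cstar) 0 < ε2 := by
    filter_upwards [hFD, hFE δ2 hδ2pos] with n h1 h2
    have hsub : ↑(cn n) ⊆ closedBall (0 : E) Rstar := by
      intro a ha
      rw [mem_closedBall, dist_zero_right]
      exact h1 a ha
    have := hδ2 (cn n) (hcn_ne n) (hcn_card n) hsub h2
    rw [Real.dist_eq, sub_zero, abs_of_nonneg hausdorffDist_nonneg]
    exact this
  rw [eventually_atTop] at hev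
  obtain ⟨N, hN⟩ := hev
  exact ⟨N, hN⟩


/-- strong consistency of the k-means algorithm on B-spline coefficient
matrices: Θ¹, Θ², … i.i.d. random R×L matrices with law μ, ∫‖Θ‖_F dμ < ∞; the population
objective `u(c) = ∫ u(Θ,c) dμ` has a unique minimizer c* over the nonempty sets of at most
K matrices; `inf{u(c) : card c ≤ K} < inf{u(c) : card c < K}`; (M_n) is an increasing
sequence of convex compact sets covering ℝ^{R×L}; and cⁿ ⊆ M_n (card ≤ K, depending on ω)
minimizes the empirical objective `u_n(c) = (1/n) Σ_{i≤n} u(Θⁱ, c)` among such sets.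
Then, almost surely, cⁿ → c* in the Hausdorff metric. -/
theorem kmeans_strong_consistency (R L K : ℕ) (hK : 0 < K)
    {Ω : Type*} [MeasurableSpace Ω] (P : Measure Ω) [IsProbabilityMeasure P]
    (μ : Measure (EuclideanSpace ℝ (Fin R × Fin L))) [IsProbabilityMeasure μ]
    (Θ : ℕ → Ω → EuclideanSpace ℝ (Fin R × Fin L))
    (hmeas : ∀ i, Measurable (Θ i))
    (hindep : iIndepFun Θ P)
    (hlaw : ∀ i, Measure.map (Θ i) P = μ)
    (hint : Integrable (fun θ => ‖θ‖) μ)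
    -- c* is the unique minimizer of the population objective over F
    (cstar : Finset (EuclideanSpace ℝ (Fin R × Fin L)))
    (hcstar_ne : cstar.Nonempty) (hcstar_card : cstar.card ≤ K)
    (hmin : ∀ (c : Finset (EuclideanSpace ℝ (Fin R × Fin L))) (hc : c.Nonempty),
      c.card ≤ K → (∫ θ, uPt θ cstar hcstar_ne ∂μ) ≤ ∫ θ, uPt θ c hc ∂μ)
    (huniq : ∀ (c : Finset (EuclideanSpace ℝ (Fin R × Fin L))) (hc : c.Nonempty),
      c.card ≤ K →
      (∀ (c' : Finset (EuclideanSpace ℝ (Fin R × Fin L))) (hc' : c'.Nonempty),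
        c'.card ≤ K → (∫ θ, uPt θ c hc ∂μ) ≤ ∫ θ, uPt θ c' hc' ∂μ) →
      c = cstar)
    -- separation: inf over card ≤ K is strictly below inf over card < K
    (hsep : (∫ θ, uPt θ cstar hcstar_ne ∂μ) <
      sInf {x : ℝ | ∃ (c : Finset (EuclideanSpace ℝ (Fin R × Fin L))) (hc : c.Nonempty),
        c.card < K ∧ x = ∫ θ, uPt θ c hc ∂μ})
    -- increasing sequence of convex compact sets covering the whole space
    (M : ℕ → Set (EuclideanSpace ℝ (Fin R × Fin L)))
    (hMmono : Monotone M) (hMconv : ∀ n, Convex ℝ (M n)) (hMcomp : ∀ n, IsCompact (M n))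
    (hMcover : (⋃ n, M n) = Set.univ)
    -- cⁿ minimizes the empirical objective over sets of ≤ K points inside M_n
    (cn : ℕ → Ω → Finset (EuclideanSpace ℝ (Fin R × Fin L)))
    (hcn_ne : ∀ n ω, (cn n ω).Nonempty)
    (hcn_card : ∀ n ω, (cn n ω).card ≤ K)
    (hcn_sub : ∀ n ω, ↑(cn n ω) ⊆ M n)
    (hcn_min : ∀ n ω (c : Finset (EuclideanSpace ℝ (Fin R × Fin L))) (hc : c.Nonempty),
      c.card ≤ K → ↑c ⊆ M n →
      (∑ i ∈ Finset.range n, uPt (Θ i ω) (cn n ω) (hcn_ne n ω)) / n ≤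
        (∑ i ∈ Finset.range n, uPt (Θ i ω) c hc) / n) :
    ∀ᵐ ω ∂P, Tendsto (fun n => hausdorffDist (↑(cn n ω) : Set (EuclideanSpace ℝ (Fin R × Fin L))) ↑cstar)
      atTop (nhds 0) := by

  classical
  -- rephrase hypotheses in terms of the total function `uC`
  have hI : ∀ (c : Finset (EuclideanSpace ℝ (Fin R × Fin L))) (hc : c.Nonempty),
      (∫ x, uPt x c hc ∂μ) = ∫ x, uC x c ∂μ := fun c hc =>
    integral_congr_ae (Filter.Eventually.of_forall fun x => (uC_eq hc).symm)
  have hmin' : ∀ c : Finset (EuclideanSpace ℝ (Fin R × Fin L)), c.Nonempty → c.card ≤ K →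
      (∫ x, uC x cstar ∂μ) ≤ ∫ x, uC x c ∂μ := by
    intro c hc hcard
    have := hmin c hc hcard
    rwa [hI cstar hcstar_ne, hI c hc] at this
  have huniq' : ∀ c : Finset (EuclideanSpace ℝ (Fin R × Fin L)), c.Nonempty → c.card ≤ K →
      (∀ c' : Finset (EuclideanSpace ℝ (Fin R × Fin L)), c'.Nonempty → c'.card ≤ K →
        (∫ x, uC x c ∂μ) ≤ ∫ x, uC x c' ∂μ) → c = cstar := by
    intro c hc hcard hm
    refine huniq c hc hcard ?_
    intro c' hc' hcard'
    have := hm c' hc' hcard'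
    rwa [hI c hc, hI c' hc']
  have hsep' : (∫ x, uC x cstar ∂μ) <
      sInf {x : ℝ | ∃ c : Finset (EuclideanSpace ℝ (Fin R × Fin L)),
        c.Nonempty ∧ c.card < K ∧ x = ∫ y, uC y c ∂μ} := by
    have hset : {x : ℝ | ∃ (c : Finset (EuclideanSpace ℝ (Fin R × Fin L))) (hc : c.Nonempty),
        c.card < K ∧ x = ∫ y, uPt y c hc ∂μ} =
        {x : ℝ | ∃ c : Finset (EuclideanSpace ℝ (Fin R × Fin L)),
          c.Nonempty ∧ c.card < K ∧ x = ∫ y, uC y c ∂μ} := by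
      ext x
      constructor
      · rintro ⟨c, hc, hcard, rfl⟩
        exact ⟨c, hc, hcard, (hI c hc).symm ▸ rfl⟩
      · rintro ⟨c, hc, hcard, rfl⟩
        exact ⟨c, hc, hcard, (hI c hc).symm⟩
    rw [← hset, ← hI cstar hcstar_ne]
    exact hsep
  -- choose the nets
  have hnets : ∀ m q : ℕ, ∃ t : Finset (EuclideanSpace ℝ (Fin R × Fin L)), t.Nonempty ∧
      ∀ p ∈ closedBall (0 : EuclideanSpace ℝ (Fin R × Fin L)) m, ∃ a ∈ t, dist p a ≤ 1 / ((q : ℝ) + 1) :=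
    fun m q => exists_net (m : ℝ) (1 / ((q : ℝ) + 1)) (by positivity)
  choose tnet htne htnet using hnets
  -- the almost-sure events
  have evA : ∀ᵐ ω ∂P, Tendsto (fun n => (∑ i ∈ Finset.range n, uC (Θ i ω) cstar) / n)
      atTop (nhds (∫ x, uC x cstar ∂μ)) :=
    slln_comp Θ hmeas hindep hlaw (fun x => uC x cstar) continuous_uC.measurable
      (integrable_uC hint cstar hcstar_ne)
  have evB : ∀ᵐ ω ∂P, ∀ m q : ℕ, ∀ c ∈ (tnet m q).powerset, c.Nonempty →
      Tendsto (fun n => (∑ i ∈ Finset.range n, uC (Θ i ω) c) / n) atTop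
        (nhds (∫ x, uC x c ∂μ)) := by
    rw [ae_all_iff]
    intro m
    rw [ae_all_iff]
    intro q
    rw [eventually_all_finset]
    intro c hc
    by_cases hcne : c.Nonempty
    · filter_upwards [slln_comp Θ hmeas hindep hlaw (fun x => uC x c) continuous_uC.measurable
        (integrable_uC hint c hcne)] with ω hω _
      exact hω
    · filter_upwards with ω hcon
      exact absurd hcon hcne
  have evC : ∀ᵐ ω ∂P, ∀ T : ℕ, Tendsto
      (fun n => (∑ i ∈ Finset.range n, gTail T (Θ i ω)) / n) atTop
      (nhds (∫ x, gTail T x ∂μ)) := by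
    rw [ae_all_iff]
    intro T
    exact slln_comp Θ hmeas hindep hlaw _ measurable_gTail (integrable_gTail hint T)
  have evD : ∀ᵐ ω ∂P, ∀ ρ : ℕ, Tendsto (fun n => (∑ i ∈ Finset.range n,
      (Metric.ball (0 : EuclideanSpace ℝ (Fin R × Fin L)) ρ).indicator (fun _ => (1 : ℝ)) (Θ i ω)) / n) atTop
      (nhds (μ (Metric.ball (0 : EuclideanSpace ℝ (Fin R × Fin L)) ρ)).toReal) := by
    rw [ae_all_iff]
    intro ρ
    have hms : MeasurableSet (Metric.ball (0 : EuclideanSpace ℝ (Fin R × Fin L)) ρ) := measurableSet_ball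
    have h1 := slln_comp Θ hmeas hindep hlaw
      ((Metric.ball (0 : EuclideanSpace ℝ (Fin R × Fin L)) ρ).indicator fun _ => (1 : ℝ))
      (measurable_const.indicator hms)
      ((integrable_const (1 : ℝ)).indicator hms)
    have h2 : (∫ x, (Metric.ball (0 : EuclideanSpace ℝ (Fin R × Fin L)) ρ).indicator (fun _ => (1 : ℝ)) x ∂μ) =
        (μ (Metric.ball (0 : EuclideanSpace ℝ (Fin R × Fin L)) ρ)).toReal := by
      exact integral_indicator_one (μ := μ) hms
    rwa [h2] at h1
  have evE : ∀ᵐ ω ∂P, Tendsto (fun n => (∑ i ∈ Finset.range n, ‖Θ i ω‖) / n) atTop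
      (nhds (∫ x, ‖x‖ ∂μ)) :=
    slln_comp Θ hmeas hindep hlaw _ measurable_norm hint
  filter_upwards [evA, evB, evC, evD, evE] with ω hA hB hC hD hE
  refine det_main K hK μ hint cstar hcstar_ne hcstar_card hmin' huniq' hsep' M hMmono
    hMcover (fun i => Θ i ω) (fun n => cn n ω) (fun n => hcn_ne n ω)
    (fun n => hcn_card n ω) (fun n => hcn_sub n ω) ?_ ?_ hA hC hD hE
  · intro n c hc hcard hsub
    have := hcn_min n ω c hc hcard hsub
    have e1 : (∑ i ∈ Finset.range n, uPt (Θ i ω) (cn n ω) (hcn_ne n ω)) =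
        ∑ i ∈ Finset.range n, uC (Θ i ω) (cn n ω) :=
      Finset.sum_congr rfl fun i _ => (uC_eq (hcn_ne n ω)).symm
    have e2 : (∑ i ∈ Finset.range n, uPt (Θ i ω) c hc) =
        ∑ i ∈ Finset.range n, uC (Θ i ω) c :=
      Finset.sum_congr rfl fun i _ => (uC_eq hc).symm
    rwa [e1, e2] at this
  · intro m q
    exact ⟨tnet m q, htnet m q, fun c hc hcne => hB m q c hc hcne⟩
end

section
/- Let μ be a probability measure on the space of R×L real matrices with ∫‖Θ‖_F μ(dΘ) < ∞, let K ≥ 1, and let M be a nonempty compact subset of ℝ^{R×L}. Then the function u(c) = ∫ u(Θ, c) μ(dΘ) attains its infimum over the collection of nonempty subsets c of M with cardinality at most K; that is, there exists a nonempty set c* ⊆ M with card(c*) ≤ K such that u(c*) ≤ u(c) for every nonempty c ⊆ M with card(c) ≤ K. -/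
open MeasureTheory

section Aux

variable {E : Type*} [NormedAddCommGroup E]

lemma uPt_continuous (c : Finset E) (hc : c.Nonempty) :
    Continuous fun θ : E => uPt θ c hc := by
  apply Continuous.finset_inf'_apply hc
  intro a _
  exact (continuous_id.sub continuous_const).norm

lemma uPt_nonneg (θ : E) (c : Finset E) (hc : c.Nonempty) : 0 ≤ uPt θ c hc := by
  apply Finset.le_inf'
  intro a _; exact norm_nonneg _

lemma uPt_le (θ : E) (c : Finset E) (hc : c.Nonempty) {a : E} (ha : a ∈ c) :
    uPt θ c hc ≤ ‖θ - a‖ := Finset.inf'_le _ ha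

lemma uPt_integrable [MeasurableSpace E] [OpensMeasurableSpace E]
    (μ : Measure E) [IsProbabilityMeasure μ]
    (hint : Integrable (fun θ => ‖θ‖) μ) (c : Finset E) (hc : c.Nonempty) :
    Integrable (fun θ => uPt θ c hc) μ := by
  obtain ⟨a, ha⟩ := id hc
  apply Integrable.mono' (hint.add (integrable_const ‖a‖))
  · exact (uPt_continuous c ⟨a, ha⟩).aestronglyMeasurable
  · refine Filter.Eventually.of_forall fun θ => ?_
    rw [Real.norm_eq_abs, abs_of_nonneg (uPt_nonneg θ c _)]
    calc uPt θ c _ ≤ ‖θ - a‖ := uPt_le θ c _ ha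
    _ ≤ ‖θ‖ + ‖a‖ := norm_sub_le _ _

end Aux

/-- if μ is a probability measure on the R×L matrices with `∫‖Θ‖_F dμ < ∞`,
K ≥ 1, and M is a nonempty compact subset of ℝ^{R×L}, then `u(c) = ∫ u(Θ, c) dμ` attains
its infimum over the nonempty subsets c of M of cardinality at most K. -/
theorem exists_population_minimizer (R L K : ℕ) (hK : 1 ≤ K)
    (μ : Measure (EuclideanSpace ℝ (Fin R × Fin L))) [IsProbabilityMeasure μ]
    (hint : Integrable (fun θ => ‖θ‖) μ)
    (M : Set (EuclideanSpace ℝ (Fin R × Fin L))) (hMne : M.Nonempty)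
    (hMcomp : IsCompact M) :
    ∃ (cstar : Finset (EuclideanSpace ℝ (Fin R × Fin L))) (hcstar : cstar.Nonempty),
      ↑cstar ⊆ M ∧ cstar.card ≤ K ∧
      ∀ (c : Finset (EuclideanSpace ℝ (Fin R × Fin L))) (hc : c.Nonempty),
        ↑c ⊆ M → c.card ≤ K →
        (∫ θ, uPt θ cstar hcstar ∂μ) ≤ ∫ θ, uPt θ c hc ∂μ := by
  classical
  haveI : NeZero K := ⟨Nat.one_le_iff_ne_zero.mp hK⟩
  have huniv : (Finset.univ : Finset (Fin K)).Nonempty := Finset.univ_nonempty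
  set img : (Fin K → EuclideanSpace ℝ (Fin R × Fin L)) →
      Finset (EuclideanSpace ℝ (Fin R × Fin L)) := fun f => Finset.univ.image f with himg
  have himgne : ∀ f, (img f).Nonempty := fun f => huniv.image f
  have huPt_img : ∀ (f : Fin K → EuclideanSpace ℝ (Fin R × Fin L)) θ,
      uPt θ (img f) (himgne f) = Finset.univ.inf' huniv fun i => ‖θ - f i‖ := by
    intro f θ
    simp only [uPt, himg]
    rw [Finset.inf'_image]
    rfl
  set F : (Fin K → EuclideanSpace ℝ (Fin R × Fin L)) → ℝ :=
    fun f => ∫ θ, uPt θ (img f) (himgne f) ∂μ with hF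
  have hlip : LipschitzWith 1 F := by
    apply LipschitzWith.of_dist_le_mul
    intro f g
    rw [NNReal.coe_one, one_mul, Real.dist_eq]
    have key : ∀ f g : Fin K → EuclideanSpace ℝ (Fin R × Fin L), F f - F g ≤ dist f g := by
      intro f g
      have hle : ∀ θ, uPt θ (img f) (himgne f) ≤ uPt θ (img g) (himgne g) + dist f g := by
        intro θ
        rw [huPt_img, huPt_img]
        obtain ⟨i, _, hi⟩ := Finset.exists_mem_eq_inf' huniv fun j => ‖θ - g j‖
        rw [hi]
        calc Finset.univ.inf' huniv (fun j => ‖θ - f j‖) ≤ ‖θ - f i‖ :=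
              Finset.inf'_le _ (Finset.mem_univ i)
        _ ≤ ‖θ - g i‖ + ‖g i - f i‖ := norm_sub_le_norm_sub_add_norm_sub _ _ _
        _ ≤ ‖θ - g i‖ + dist f g := by
              gcongr
              rw [← dist_eq_norm, dist_comm]
              exact dist_le_pi_dist f g i
      have h : F f ≤ F g + dist f g := by
        rw [hF]
        calc ∫ θ, uPt θ (img f) (himgne f) ∂μ
            ≤ ∫ θ, (uPt θ (img g) (himgne g) + dist f g) ∂μ :=
              integral_mono (uPt_integrable μ hint _ _)
                ((uPt_integrable μ hint _ _).add (integrable_const _)) hle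
        _ = (∫ θ, uPt θ (img g) (himgne g) ∂μ) + dist f g := by
              rw [integral_add (uPt_integrable μ hint _ _) (integrable_const _),
                integral_const]
              simp
      linarith
    have k2 := key g f
    rw [dist_comm] at k2
    exact abs_sub_le_iff.mpr ⟨by linarith [key f g], by linarith⟩
  set S : Set (Fin K → EuclideanSpace ℝ (Fin R × Fin L)) := Set.univ.pi fun _ => M with hS
  have hScomp : IsCompact S := isCompact_univ_pi fun _ => hMcomp
  have hSne : S.Nonempty := ⟨fun _ => hMne.choose, fun i _ => hMne.choose_spec⟩
  obtain ⟨fstar, hfstarS, hmin⟩ := hScomp.exists_isMinOn hSne hlip.continuous.continuousOn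
  refine ⟨img fstar, himgne fstar, ?_, ?_, ?_⟩
  · intro x hx
    simp only [himg, Finset.coe_image, Set.mem_image] at hx
    obtain ⟨i, _, rfl⟩ := hx
    exact hfstarS i (Set.mem_univ i)
  · calc (img fstar).card ≤ (Finset.univ : Finset (Fin K)).card := Finset.card_image_le
    _ = K := by simp
  · intro c hc hcM hcK
    have hcpos : 0 < c.card := Finset.card_pos.mpr hc
    set f : Fin K → EuclideanSpace ℝ (Fin R × Fin L) :=
      fun i => c.equivFin.symm ⟨i.val % c.card, Nat.mod_lt _ hcpos⟩ with hf
    have hfc : ∀ i, f i ∈ c := fun i => (c.equivFin.symm _).2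
    have hfS : f ∈ S := fun i _ => hcM (hfc i)
    have himgf : img f = c := by
      apply Finset.Subset.antisymm
      · intro x hx
        simp only [himg, Finset.mem_image] at hx
        obtain ⟨i, _, rfl⟩ := hx
        exact hfc i
      · intro x hx
        simp only [himg, Finset.mem_image]
        set j : Fin c.card := c.equivFin ⟨x, hx⟩ with hj
        refine ⟨⟨j.val, lt_of_lt_of_le j.2 hcK⟩, Finset.mem_univ _, ?_⟩
        simp only [hf]
        have heq : (⟨(⟨j.val, lt_of_lt_of_le j.2 hcK⟩ : Fin K).val % c.card,
            Nat.mod_lt _ hcpos⟩ : Fin c.card) = j := Fin.ext (Nat.mod_eq_of_lt j.2)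
        rw [heq, hj, Equiv.symm_apply_apply]
    have h1 : F fstar ≤ F f := hmin hfS
    have h2 : F f = ∫ θ, uPt θ c hc ∂μ := by
      simp only [hF, himgf]
    calc (∫ θ, uPt θ (img fstar) (himgne fstar) ∂μ) = F fstar := rfl
    _ ≤ F f := h1
    _ = _ := h2
end

section
/- Let h be a probability measure on a measurable space 𝒳, let φ_1, …, φ_p : 𝒳 → ℝ be bounded, measurable, and linearly independent as elements of L²(h), and let g : 𝒳 → ℝ be bounded and measurable. Let (X_j)_{j≥1} be i.i.d. with distribution h, and let (ε_j)_{j≥1} be i.i.d. real random variables, independent of (X_j), with mean 0 and finite variance σ². For each m, let θ̂_m ∈ ℝ^p be a minimizer of θ ↦ Σ_{j=1}^m ( g(X_j) + ε_j − Σ_{k=1}^p θ_k φ_k(X_j) )². Let θ* ∈ ℝ^p be the (unique) coefficient vector of the orthogonal projection of g onto span{φ_1, …, φ_p} in L²(h). Then, almost surely, θ̂_m → θ* as m → ∞ (in particular, ‖Σ_k (θ̂_m)_k φ_k − Σ_k θ*_k φ_k‖_{L²(h)} → 0 almost surely). -/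
open MeasureTheory ProbabilityTheory Filter

open Topology

section LSQAux

open Set MeasurableSpace Topology

lemma LSQ.quad_zero (s r : ℝ) (hs : 0 ≤ s) (H : ∀ t : ℝ, 0 ≤ t ^ 2 * s - 2 * t * r) :
    r = 0 := by
  set t := r / (s + 1) with htdef
  have hs1 : (0:ℝ) < s + 1 := by linarith
  have ht : t * (s + 1) = r := div_mul_cancel₀ _ (ne_of_gt hs1)
  have h1 := H t
  have h4 : t * r = t ^ 2 * (s + 1) := by rw [← ht]; ring
  have h2 : t ^ 2 = 0 := le_antisymm
    (by nlinarith [mul_nonneg (sq_nonneg t) hs]) (sq_nonneg t)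
  have h3 : t = 0 := (pow_eq_zero_iff two_ne_zero).mp h2
  rw [← ht, h3, zero_mul]

lemma LSQ.integrable_of_bdd {α : Type*} [MeasurableSpace α] {μ : Measure α} [IsFiniteMeasure μ]
    {f : α → ℝ} (hf : Measurable f) {C : ℝ} (hC : ∀ x, |f x| ≤ C) : Integrable f μ :=
  (integrable_const C).mono' hf.aestronglyMeasurable
    (Filter.Eventually.of_forall fun x => by simpa [Real.norm_eq_abs] using hC x)

lemma LSQ.bdd_mul {α : Type*} {f g : α → ℝ} {Cf Cg : ℝ} (hf : ∀ x, |f x| ≤ Cf)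
    (hg : ∀ x, |g x| ≤ Cg) : ∀ x, |f x * g x| ≤ Cf * Cg := fun x => by
  rw [abs_mul]
  exact mul_le_mul (hf x) (hg x) (abs_nonneg _) ((abs_nonneg _).trans (hf x))

lemma LSQ.pair_indepFun {Ω 𝒳 : Type*} [MeasurableSpace Ω] [MeasurableSpace 𝒳]
    {P : Measure Ω} [IsProbabilityMeasure P]
    {X : ℕ → Ω → 𝒳} {ε : ℕ → Ω → ℝ}
    (hXmeas : ∀ j, Measurable (X j)) (hεmeas : ∀ j, Measurable (ε j))
    (hXindep : iIndepFun X P)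
    (hεindep : iIndepFun ε P)
    (hXε : IndepFun (fun ω => fun j => X j ω) (fun ω => fun j => ε j ω) P)
    {i j : ℕ} (hij : i ≠ j) :
    IndepFun (fun ω => (X i ω, ε i ω)) (fun ω => (X j ω, ε j ω)) P := by
  set C : Set (Set (𝒳 × ℝ)) :=
    image2 (· ×ˢ ·) { s : Set 𝒳 | MeasurableSet s } { t : Set ℝ | MeasurableSet t } with hCdef
  have hCpi : IsPiSystem C := isPiSystem_prod
  rw [IndepFun_iff_Indep]
  have hcomap : ∀ n : ℕ, MeasurableSpace.comap (fun ω => (X n ω, ε n ω))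
      (Prod.instMeasurableSpace) = generateFrom ((fun t => (fun ω => (X n ω, ε n ω)) ⁻¹' t) '' C) := by
    intro n
    rw [← generateFrom_prod, comap_generateFrom]
  rw [hcomap i, hcomap j]
  have hle : ∀ n : ℕ, generateFrom ((fun t => (fun ω => (X n ω, ε n ω)) ⁻¹' t) '' C) ≤ ‹MeasurableSpace Ω› := by
    intro n
    rw [← hcomap n]
    exact ((hXmeas n).prodMk (hεmeas n)).comap_le
  refine IndepSets.indep (hle i) (hle j) ?_ ?_ rfl rfl ?_
  · have := hCpi.comap (fun ω => (X i ω, ε i ω))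
    exact this
  · have := hCpi.comap (fun ω => (X j ω, ε j ω))
    exact this
  · rintro _ _ ⟨_, ⟨A, hA, B, hB, rfl⟩, rfl⟩ ⟨_, ⟨A', hA', B', hB', rfl⟩, rfl⟩
    have e1 : (fun ω => (X i ω, ε i ω)) ⁻¹' (A ×ˢ B) = X i ⁻¹' A ∩ ε i ⁻¹' B :=
      Set.mk_preimage_prod _ _
    have e2 : (fun ω => (X j ω, ε j ω)) ⁻¹' (A' ×ˢ B') = X j ⁻¹' A' ∩ ε j ⁻¹' B' :=
      Set.mk_preimage_prod _ _
    simp only [ae_dirac_eq, Filter.eventually_pure, Kernel.const_apply]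
    rw [e1, e2]
    have rearr : (X i ⁻¹' A ∩ ε i ⁻¹' B) ∩ (X j ⁻¹' A' ∩ ε j ⁻¹' B')
        = (X i ⁻¹' A ∩ X j ⁻¹' A') ∩ (ε i ⁻¹' B ∩ ε j ⁻¹' B') := by
      ext ω; simp only [Set.mem_inter_iff, Set.mem_preimage]; tauto
    rw [rearr]
    have hXset : MeasurableSet[MeasurableSpace.comap (fun ω => fun n => X n ω)
        (MeasurableSpace.pi)] (X i ⁻¹' A ∩ X j ⁻¹' A') := by
      refine ⟨(fun f => f i) ⁻¹' A ∩ (fun f => f j) ⁻¹' A', ?_, rfl⟩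
      exact ((measurable_pi_apply i) (show MeasurableSet A from hA)).inter
        ((measurable_pi_apply j) (show MeasurableSet A' from hA'))
    have hεset : MeasurableSet[MeasurableSpace.comap (fun ω => fun n => ε n ω)
        (MeasurableSpace.pi)] (ε i ⁻¹' B ∩ ε j ⁻¹' B') := by
      refine ⟨(fun f => f i) ⁻¹' B ∩ (fun f => f j) ⁻¹' B', ?_, rfl⟩
      exact ((measurable_pi_apply i) (show MeasurableSet B from hB)).inter
        ((measurable_pi_apply j) (show MeasurableSet B' from hB'))
    rw [hXε.meas_inter hXset hεset,
      (hXindep.indepFun hij).meas_inter ⟨A, hA, rfl⟩ ⟨A', hA', rfl⟩,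
      (hεindep.indepFun hij).meas_inter ⟨B, hB, rfl⟩ ⟨B', hB', rfl⟩]
    have c1 : P (X i ⁻¹' A ∩ ε i ⁻¹' B) = P (X i ⁻¹' A) * P (ε i ⁻¹' B) :=
      IndepFun.meas_inter (hXε.comp (measurable_pi_apply i) (measurable_pi_apply i))
        ⟨A, hA, rfl⟩ ⟨B, hB, rfl⟩
    have c2 : P (X j ⁻¹' A' ∩ ε j ⁻¹' B') = P (X j ⁻¹' A') * P (ε j ⁻¹' B') :=
      IndepFun.meas_inter (hXε.comp (measurable_pi_apply j) (measurable_pi_apply j))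
        ⟨A', hA', rfl⟩ ⟨B', hB', rfl⟩
    rw [c1, c2]
    ring

lemma LSQ.sllnX {Ω 𝒳 : Type*} [MeasurableSpace Ω] [MeasurableSpace 𝒳]
    {P : Measure Ω} [IsProbabilityMeasure P] {h : Measure 𝒳}
    {X : ℕ → Ω → 𝒳} (hXmeas : ∀ j, Measurable (X j))
    (hXindep : iIndepFun X P)
    (hXlaw : ∀ j, Measure.map (X j) P = h)
    (f : 𝒳 → ℝ) (C : ℝ) (hf : Measurable f) (hC : ∀ x, |f x| ≤ C) :
    ∀ᵐ ω ∂P, Tendsto (fun n : ℕ => (∑ j ∈ Finset.range n, f (X j ω)) / n) atTop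
      (𝓝 (∫ x, f x ∂h)) := by
  have hint : Integrable (fun ω => f (X 0 ω)) P :=
    LSQ.integrable_of_bdd (hf.comp (hXmeas 0)) (fun ω => hC _)
  have hlim : ∫ x, f x ∂h = ∫ ω, f (X 0 ω) ∂P := by
    rw [← hXlaw 0, integral_map (hXmeas 0).aemeasurable hf.aestronglyMeasurable]
  rw [hlim]
  exact strong_law_ae_real (fun j ω => f (X j ω)) hint
    (fun i j hij => (hXindep.indepFun hij).comp hf hf)
    (fun j => IdentDistrib.comp ⟨(hXmeas j).aemeasurable, (hXmeas 0).aemeasurable,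
        by rw [hXlaw j, hXlaw 0]⟩ hf)

lemma LSQ.abs_le_sq_add_one (e : ℝ) : |e| ≤ e ^ 2 + 1 := by
  nlinarith [sq_nonneg (|e| - 1), sq_abs e, abs_nonneg e]

lemma LSQ.sllnW {Ω 𝒳 : Type*} [MeasurableSpace Ω] [MeasurableSpace 𝒳]
    {P : Measure Ω} [IsProbabilityMeasure P] {h : Measure 𝒳}
    {X : ℕ → Ω → 𝒳} {ε : ℕ → Ω → ℝ}
    (hXmeas : ∀ j, Measurable (X j)) (hεmeas : ∀ j, Measurable (ε j))
    (hXlaw : ∀ j, Measure.map (X j) P = h)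
    {Pe : Measure ℝ} [IsProbabilityMeasure Pe]
    (hεlaw : ∀ j, Measure.map (ε j) P = Pe)
    (hmean : ∫ e, e ∂Pe = 0) (hmoment : Integrable (fun e : ℝ => e ^ 2) Pe)
    (hXε : IndepFun (fun ω => fun j => X j ω) (fun ω => fun j => ε j ω) P)
    (hpair : ∀ i j : ℕ, i ≠ j →
      IndepFun (fun ω => (X i ω, ε i ω)) (fun ω => (X j ω, ε j ω)) P)
    (f : 𝒳 → ℝ) (C : ℝ) (hf : Measurable f) (hC : ∀ x, |f x| ≤ C) :
    ∀ᵐ ω ∂P, Tendsto (fun n : ℕ => (∑ j ∈ Finset.range n, ε j ω * f (X j ω)) / n) atTop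
      (𝓝 (0 : ℝ)) := by
  have hYlaw : ∀ n : ℕ, Measure.map (fun ω => (X n ω, ε n ω)) P = h.prod Pe := fun n => by
    rw [(indepFun_iff_map_prod_eq_prod_map_map (hXmeas n).aemeasurable
      (hεmeas n).aemeasurable).mp
      (hXε.comp (measurable_pi_apply n) (measurable_pi_apply n)), hXlaw n, hεlaw n]
  set F : 𝒳 × ℝ → ℝ := fun y => y.2 * f y.1 with hFdef
  have hFmeas : Measurable F := measurable_snd.mul (hf.comp measurable_fst)
  have hεint : Integrable (ε 0) P := by
    have h1 : Integrable (fun e : ℝ => e) Pe := by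
      refine (hmoment.add (integrable_const 1)).mono' aestronglyMeasurable_id
        (Filter.Eventually.of_forall fun e => ?_)
      simpa [Real.norm_eq_abs] using LSQ.abs_le_sq_add_one e
    rw [← hεlaw 0] at h1
    exact (integrable_map_measure aestronglyMeasurable_id (hεmeas 0).aemeasurable).mp h1
  have hfint : Integrable (fun ω => f (X 0 ω)) P :=
    LSQ.integrable_of_bdd (hf.comp (hXmeas 0)) fun ω => hC _
  have hWmeas : ∀ j : ℕ, Measurable (fun ω => ε j ω * f (X j ω)) := fun j =>
    (hεmeas j).mul (hf.comp (hXmeas j))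
  have hWint : Integrable (fun ω => ε 0 ω * f (X 0 ω)) P := by
    refine (hεint.abs.const_mul C).mono' (hWmeas 0).aestronglyMeasurable
      (Filter.Eventually.of_forall fun ω => ?_)
    rw [Real.norm_eq_abs, abs_mul]
    have h1 := hC (X 0 ω)
    nlinarith [abs_nonneg (ε 0 ω), abs_nonneg (f (X 0 ω))]
  have hmul : IndepFun (ε 0) (fun ω => f (X 0 ω)) P :=
    (hXε.comp (measurable_pi_apply 0) (measurable_pi_apply 0)).symm.comp measurable_id hf
  have hε0 : ∫ ω, ε 0 ω ∂P = 0 := by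
    have h4 := integral_map (μ := P) (hεmeas 0).aemeasurable
      (f := fun e : ℝ => e) measurable_id.aestronglyMeasurable
    rw [← hmean, ← hεlaw 0]
    exact h4.symm
  have hE : ∫ ω, ε 0 ω * f (X 0 ω) ∂P = 0 := by
    have h2 := hmul.integral_mul_eq_mul_integral hεint.aestronglyMeasurable hfint.aestronglyMeasurable
    have h3 : ∫ ω, ε 0 ω * f (X 0 ω) ∂P
        = (∫ ω, ε 0 ω ∂P) * ∫ ω, f (X 0 ω) ∂P := h2
    rw [h3, hε0, zero_mul]
  have hmain := strong_law_ae_real (fun j ω => ε j ω * f (X j ω)) hWint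
    (fun i j hij => (hpair i j hij).comp hFmeas hFmeas)
    (fun j => IdentDistrib.comp
      (⟨((hXmeas j).prodMk (hεmeas j)).aemeasurable,
        ((hXmeas 0).prodMk (hεmeas 0)).aemeasurable,
        by rw [hYlaw j, hYlaw 0]⟩ :
        IdentDistrib (fun ω => (X j ω, ε j ω)) (fun ω => (X 0 ω, ε 0 ω)) P P) hFmeas)
  filter_upwards [hmain] with ω hω
  convert hω using 2
  exact hE.symm

lemma LSQ.empirical_normal_eq {m : ℕ} (w u : ℕ → ℝ)
    (H : ∀ t : ℝ, ∑ j ∈ Finset.range m, (w j) ^ 2 ≤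
      ∑ j ∈ Finset.range m, (w j - t * u j) ^ 2) :
    ∑ j ∈ Finset.range m, w j * u j = 0 := by
  refine LSQ.quad_zero (∑ j ∈ Finset.range m, (u j) ^ 2) _
    (Finset.sum_nonneg fun j _ => sq_nonneg _) (fun t => ?_)
  have expand : ∑ j ∈ Finset.range m, (w j - t * u j) ^ 2
      = ∑ j ∈ Finset.range m, (w j) ^ 2
        - 2 * t * ∑ j ∈ Finset.range m, w j * u j
        + t ^ 2 * ∑ j ∈ Finset.range m, (u j) ^ 2 := by
    rw [Finset.mul_sum, Finset.mul_sum, ← Finset.sum_sub_distrib, ← Finset.sum_add_distrib]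
    exact Finset.sum_congr rfl fun j _ => by ring
  have := H t
  rw [expand] at this
  linarith

lemma LSQ.integral_normal_eq {α : Type*} [MeasurableSpace α] {μ : Measure α}
    [IsProbabilityMeasure μ]
    {w u : α → ℝ} (hw : Measurable w) {Cw : ℝ} (hCw : ∀ x, |w x| ≤ Cw)
    (hu : Measurable u) {Cu : ℝ} (hCu : ∀ x, |u x| ≤ Cu)
    (H : ∀ t : ℝ, ∫ x, w x ^ 2 ∂μ ≤ ∫ x, (w x - t * u x) ^ 2 ∂μ) :
    ∫ x, w x * u x ∂μ = 0 := by
  have hw2 : Integrable (fun x => w x ^ 2) μ := by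
    refine LSQ.integrable_of_bdd (hw.pow_const 2) (C := Cw * Cw) (fun x => ?_)
    simpa [sq] using LSQ.bdd_mul hCw hCw x
  have hu2 : Integrable (fun x => u x ^ 2) μ := by
    refine LSQ.integrable_of_bdd (hu.pow_const 2) (C := Cu * Cu) (fun x => ?_)
    simpa [sq] using LSQ.bdd_mul hCu hCu x
  have hwu : Integrable (fun x => w x * u x) μ :=
    LSQ.integrable_of_bdd (hw.mul hu) (LSQ.bdd_mul hCw hCu)
  refine LSQ.quad_zero (∫ x, u x ^ 2 ∂μ) _ (integral_nonneg fun x => sq_nonneg _) (fun t => ?_)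
  have expand : ∫ x, (w x - t * u x) ^ 2 ∂μ
      = ∫ x, w x ^ 2 ∂μ - 2 * t * ∫ x, w x * u x ∂μ + t ^ 2 * ∫ x, u x ^ 2 ∂μ := by
    have e1 : ∀ x, (w x - t * u x) ^ 2
        = w x ^ 2 - 2 * t * (w x * u x) + t ^ 2 * u x ^ 2 := fun x => by ring
    simp only [e1]
    have i1 : Integrable (fun x => w x ^ 2 - 2 * t * (w x * u x)) μ :=
      hw2.sub (hwu.const_mul (2 * t))
    have i2 : Integrable (fun x => t ^ 2 * u x ^ 2) μ := hu2.const_mul (t ^ 2)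
    have i3 : Integrable (fun x => 2 * t * (w x * u x)) μ := hwu.const_mul (2 * t)
    rw [integral_add i1 i2, integral_sub hw2 i3, integral_const_mul, integral_const_mul]
  have := H t
  rw [expand] at this
  linarith

lemma LSQ.gram_quad {α : Type*} [MeasurableSpace α] {μ : Measure α} [IsProbabilityMeasure μ]
    {p : ℕ} (φ : Fin p → α → ℝ) (hφ : ∀ k, Measurable (φ k)) (Cφ : Fin p → ℝ)
    (hCφ : ∀ k x, |φ k x| ≤ Cφ k) (v : Fin p → ℝ) :
    ∫ x, (∑ k, v k * φ k x) ^ 2 ∂μ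
      = ∑ k, ∑ l, (v k * v l) * ∫ x, φ k x * φ l x ∂μ := by
  have hint : ∀ k l : Fin p, Integrable (fun x => φ k x * φ l x) μ := fun k l =>
    LSQ.integrable_of_bdd ((hφ k).mul (hφ l)) (LSQ.bdd_mul (hCφ k) (hCφ l))
  have e1 : ∀ x, (∑ k, v k * φ k x) ^ 2
      = ∑ k, ∑ l, (v k * v l) * (φ k x * φ l x) := fun x => by
    rw [sq, Finset.sum_mul_sum]
    exact Finset.sum_congr rfl fun k _ => Finset.sum_congr rfl fun l _ => by ring
  simp only [e1]
  rw [integral_finset_sum _ (fun k _ => integrable_finset_sum _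
    (fun l _ => (hint k l).const_mul _))]
  exact Finset.sum_congr rfl fun k _ => by
    rw [integral_finset_sum _ (fun l _ => (hint k l).const_mul _)]
    exact Finset.sum_congr rfl fun l _ => integral_const_mul _ _

end LSQAux

set_option maxHeartbeats 2000000 in
/-- strong consistency of the least-squares coefficient estimator, the
paper's Lemma 2 for a general linearly independent system of bounded basis functions:
φ_1, …, φ_p bounded measurable and linearly independent in L²(h); g bounded measurable;
(X_j) i.i.d. with law h; (ε_j) i.i.d. with mean 0 and finite variance σ², independent of
(X_j); θ̂_m a least-squares minimizer of
`θ ↦ Σ_{j=1}^m (g(X_j) + ε_j − Σ_k θ_k φ_k(X_j))²`; θ* the coefficient vector of the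
orthogonal projection of g onto span{φ_1, …, φ_p} in L²(h) (characterized as the minimizer
of the population squared L²(h)-error). Then almost surely θ̂_m → θ* as m → ∞. -/
theorem least_squares_strong_consistency {𝒳 : Type*} [MeasurableSpace 𝒳]
    {Ω : Type*} [MeasurableSpace Ω] (P : Measure Ω) [IsProbabilityMeasure P]
    (h : Measure 𝒳) [IsProbabilityMeasure h]
    (p : ℕ) (φ : Fin p → 𝒳 → ℝ)
    (hφmeas : ∀ k, Measurable (φ k))
    (hφbdd : ∀ k, ∃ C : ℝ, ∀ x, |φ k x| ≤ C)
    (hli : ∀ a : Fin p → ℝ, (∀ᵐ x ∂h, ∑ k, a k * φ k x = 0) → a = 0)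
    (g : 𝒳 → ℝ) (hgmeas : Measurable g) (hgbdd : ∃ C : ℝ, ∀ x, |g x| ≤ C)
    -- the design points (X_j), i.i.d. with distribution h
    (X : ℕ → Ω → 𝒳) (hXmeas : ∀ j, Measurable (X j))
    (hXindep : iIndepFun X P)
    (hXlaw : ∀ j, Measure.map (X j) P = h)
    -- the errors (ε_j), i.i.d. with mean 0 and finite variance σ²
    (ε : ℕ → Ω → ℝ) (hεmeas : ∀ j, Measurable (ε j))
    (hεindep : iIndepFun ε P)
    (Pe : Measure ℝ) [IsProbabilityMeasure Pe]
    (hεlaw : ∀ j, Measure.map (ε j) P = Pe)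
    (σ : ℝ) (hmean : ∫ e, e ∂Pe = 0) (hmoment : Integrable (fun e : ℝ => e ^ 2) Pe)
    (hvar : ∫ e, e ^ 2 ∂Pe = σ ^ 2)
    -- the error sequence is independent of the design sequence
    (hXε : IndepFun (fun ω => fun j => X j ω) (fun ω => fun j => ε j ω) P)
    -- θ̂_m minimizes the residual sum of squares over the first m observations
    (θhat : ℕ → Ω → Fin p → ℝ)
    (hθhat : ∀ m ω (a : Fin p → ℝ),
      ∑ j ∈ Finset.range m, (g (X j ω) + ε j ω - ∑ k, θhat m ω k * φ k (X j ω)) ^ 2 ≤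
        ∑ j ∈ Finset.range m, (g (X j ω) + ε j ω - ∑ k, a k * φ k (X j ω)) ^ 2)
    -- θ* is the coefficient vector of the orthogonal projection of g onto span{φ_k} in L²(h)
    (θstar : Fin p → ℝ)
    (hθstar : ∀ a : Fin p → ℝ,
      (∫ x, (g x - ∑ k, θstar k * φ k x) ^ 2 ∂h) ≤ ∫ x, (g x - ∑ k, a k * φ k x) ^ 2 ∂h) :
    ∀ᵐ ω ∂P, Tendsto (fun m => θhat m ω) atTop (nhds θstar) := by
  classical
  choose Cφ hCφ using hφbdd
  obtain ⟨Cg, hCg⟩ := hgbdd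
  set A : Matrix (Fin p) (Fin p) ℝ := (fun k l => ∫ x, φ k x * φ l x ∂h) with hAdef
  set b : Fin p → ℝ := (fun k => ∫ x, g x * φ k x ∂h) with hbdef
  have hAkl : ∀ k l, A k l = ∫ x, φ k x * φ l x ∂h := fun k l => rfl
  have hφφint : ∀ k l : Fin p, Integrable (fun x => φ k x * φ l x) h := fun k l =>
    LSQ.integrable_of_bdd ((hφmeas k).mul (hφmeas l)) (LSQ.bdd_mul (hCφ k) (hCφ l))
  have hgφint : ∀ k : Fin p, Integrable (fun x => g x * φ k x) h := fun k =>
    LSQ.integrable_of_bdd (hgmeas.mul (hφmeas k)) (LSQ.bdd_mul hCg (hCφ k))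
  have lin_meas : ∀ v : Fin p → ℝ, Measurable (fun x => ∑ k, v k * φ k x) := fun v =>
    Finset.measurable_sum _ (fun k _ => (hφmeas k).const_mul (v k))
  have lin_bdd : ∀ (v : Fin p → ℝ) x, |∑ k, v k * φ k x| ≤ ∑ k, |v k| * Cφ k := by
    intro v x
    refine (Finset.abs_sum_le_sum_abs _ _).trans (Finset.sum_le_sum fun k _ => ?_)
    rw [abs_mul]
    exact mul_le_mul_of_nonneg_left (hCφ k x) (abs_nonneg _)
  -- determinant of the Gram matrix is nonzero
  have hdetA : A.det ≠ 0 := by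
    intro hdet
    obtain ⟨v, hv, hAv⟩ := Matrix.exists_mulVec_eq_zero_iff.mpr hdet
    have hmulv : ∀ k, ∑ l, A k l * v l = 0 := by
      intro k
      have h1 : A.mulVec v k = 0 := by rw [hAv]; rfl
      simpa [Matrix.mulVec, dotProduct] using h1
    have hquad : ∫ x, (∑ k, v k * φ k x) ^ 2 ∂h = 0 := by
      rw [LSQ.gram_quad φ hφmeas Cφ hCφ v]
      have h0 : ∀ k : Fin p, ∑ l, (v k * v l) * (∫ x, φ k x * φ l x ∂h) = 0 := by
        intro k
        have : ∑ l, (v k * v l) * (∫ x, φ k x * φ l x ∂h) = v k * ∑ l, A k l * v l := by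
          rw [Finset.mul_sum]
          exact Finset.sum_congr rfl fun l _ => by rw [hAkl]; ring
        rw [this, hmulv k, mul_zero]
      rw [Finset.sum_congr rfl (fun k _ => h0 k), Finset.sum_const, smul_zero]
    have hIntSq : Integrable (fun x => (∑ k, v k * φ k x) ^ 2) h := by
      refine LSQ.integrable_of_bdd ((lin_meas v).pow_const 2)
        (C := (∑ k, |v k| * Cφ k) * (∑ k, |v k| * Cφ k)) (fun x => ?_)
      simpa [sq] using LSQ.bdd_mul (lin_bdd v) (lin_bdd v) x
    have hae := (integral_eq_zero_iff_of_nonneg (fun x => sq_nonneg _) hIntSq).mp hquad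
    refine hv (hli v (hae.mono fun x hx => ?_))
    have hx' : (∑ k, v k * φ k x) ^ 2 = 0 := hx
    exact (pow_eq_zero_iff two_ne_zero).mp hx'
  -- population normal equations
  have hbstar : A.mulVec θstar = b := by
    funext k
    have hψmeas : Measurable (fun x => g x - ∑ l, θstar l * φ l x) :=
      hgmeas.sub (lin_meas θstar)
    have hψbdd : ∀ x, |g x - ∑ l, θstar l * φ l x| ≤ Cg + ∑ l, |θstar l| * Cφ l := fun x =>
      (abs_sub _ _).trans (add_le_add (hCg x) (lin_bdd θstar x))
    have hsplit : ∀ (t : ℝ) (x : 𝒳),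
        ∑ l, (θstar l + t * (if l = k then 1 else 0)) * φ l x
          = (∑ l, θstar l * φ l x) + t * φ k x := by
      intro t x
      simp only [add_mul, Finset.sum_add_distrib, ite_mul, one_mul, zero_mul, mul_ite,
        mul_zero, mul_one, Finset.sum_ite_eq', Finset.mem_univ, if_true]
    have hr : ∫ x, (g x - ∑ l, θstar l * φ l x) * φ k x ∂h = 0 := by
      refine LSQ.integral_normal_eq hψmeas hψbdd (hφmeas k) (hCφ k) (fun t => ?_)
      have h1 := hθstar (fun l => θstar l + t * (if l = k then 1 else 0))
      have e2 : (fun x => (g x - ∑ l, (θstar l + t * (if l = k then 1 else 0)) * φ l x) ^ 2)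
          = fun x => ((g x - ∑ l, θstar l * φ l x) - t * φ k x) ^ 2 := by
        funext x
        rw [hsplit t x]
        ring
      rw [e2] at h1
      exact h1
    have hexp : ∫ x, (g x - ∑ l, θstar l * φ l x) * φ k x ∂h
        = b k - ∑ l, θstar l * (∫ x, φ l x * φ k x ∂h) := by
      have e3 : ∀ x, (g x - ∑ l, θstar l * φ l x) * φ k x
          = g x * φ k x - ∑ l, θstar l * (φ l x * φ k x) := fun x => by
        rw [sub_mul, Finset.sum_mul]
        congr 1
        exact Finset.sum_congr rfl fun l _ => by ring
      simp only [e3]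
      rw [integral_sub (hgφint k)
        (integrable_finset_sum _ fun l _ => (hφφint l k).const_mul _),
        integral_finset_sum _ (fun l _ => (hφφint l k).const_mul _)]
      congr 1
      exact Finset.sum_congr rfl fun l _ => integral_const_mul _ _
    rw [hexp] at hr
    have hAval : A.mulVec θstar k = ∑ l, A k l * θstar l := by
      simp [Matrix.mulVec, dotProduct]
    rw [hAval]
    have : ∑ l, A k l * θstar l = ∑ l, θstar l * (∫ x, φ l x * φ k x ∂h) := by
      refine Finset.sum_congr rfl fun l _ => ?_
      rw [hAkl k l, mul_comm]
      congr 1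
      exact integral_congr_ae (Filter.Eventually.of_forall fun x => mul_comm _ _)
    rw [this]
    linarith
  -- empirical normal equations
  have hNE : ∀ (m : ℕ) (ω : Ω) (k : Fin p),
      ∑ l, (∑ j ∈ Finset.range m, φ k (X j ω) * φ l (X j ω)) * θhat m ω l
        = ∑ j ∈ Finset.range m, (g (X j ω) + ε j ω) * φ k (X j ω) := by
    intro m ω k
    have hr := LSQ.empirical_normal_eq
      (w := fun j => g (X j ω) + ε j ω - ∑ l, θhat m ω l * φ l (X j ω))
      (u := fun j => φ k (X j ω)) (m := m) ?_
    · have e4 : ∀ j, (g (X j ω) + ε j ω - ∑ l, θhat m ω l * φ l (X j ω)) * φ k (X j ω)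
          = (g (X j ω) + ε j ω) * φ k (X j ω)
            - ∑ l, (φ k (X j ω) * φ l (X j ω)) * θhat m ω l := fun j => by
        rw [sub_mul, Finset.sum_mul]
        congr 1
        exact Finset.sum_congr rfl fun l _ => by ring
      rw [Finset.sum_congr rfl (fun j _ => e4 j), Finset.sum_sub_distrib] at hr
      have e5 : ∑ l, (∑ j ∈ Finset.range m, φ k (X j ω) * φ l (X j ω)) * θhat m ω l
          = ∑ j ∈ Finset.range m, ∑ l, (φ k (X j ω) * φ l (X j ω)) * θhat m ω l := by
        simp_rw [Finset.sum_mul]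
        exact Finset.sum_comm
      rw [e5]
      linarith
    · intro t
      have h1 := hθhat m ω (fun l => θhat m ω l + t * (if l = k then 1 else 0))
      have hsplit2 : ∀ j, ∑ l, (θhat m ω l + t * (if l = k then 1 else 0)) * φ l (X j ω)
          = (∑ l, θhat m ω l * φ l (X j ω)) + t * φ k (X j ω) := by
        intro j
        simp only [add_mul, Finset.sum_add_distrib, ite_mul, one_mul, zero_mul, mul_ite,
          mul_zero, mul_one, Finset.sum_ite_eq', Finset.mem_univ, if_true]
      have e6 : ∀ j, (g (X j ω) + ε j ω
            - ∑ l, (θhat m ω l + t * (if l = k then 1 else 0)) * φ l (X j ω)) ^ 2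
          = ((g (X j ω) + ε j ω - ∑ l, θhat m ω l * φ l (X j ω)) - t * φ k (X j ω)) ^ 2 :=
        fun j => by rw [hsplit2 j]; ring
      calc ∑ j ∈ Finset.range m,
            (g (X j ω) + ε j ω - ∑ l, θhat m ω l * φ l (X j ω)) ^ 2
          ≤ ∑ j ∈ Finset.range m, (g (X j ω) + ε j ω
              - ∑ l, (θhat m ω l + t * (if l = k then 1 else 0)) * φ l (X j ω)) ^ 2 := h1
        _ = ∑ j ∈ Finset.range m, ((g (X j ω) + ε j ω - ∑ l, θhat m ω l * φ l (X j ω))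
              - t * φ k (X j ω)) ^ 2 := Finset.sum_congr rfl fun j _ => e6 j
  -- almost sure convergences
  have hAconv : ∀ᵐ ω ∂P, ∀ k l : Fin p, Tendsto
      (fun n : ℕ => (∑ j ∈ Finset.range n, φ k (X j ω) * φ l (X j ω)) / n) atTop
      (𝓝 (A k l)) := by
    rw [ae_all_iff]
    intro k
    rw [ae_all_iff]
    intro l
    exact LSQ.sllnX hXmeas hXindep hXlaw _ _ ((hφmeas k).mul (hφmeas l))
      (LSQ.bdd_mul (hCφ k) (hCφ l))
  have hGconv : ∀ᵐ ω ∂P, ∀ k : Fin p, Tendsto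
      (fun n : ℕ => (∑ j ∈ Finset.range n, g (X j ω) * φ k (X j ω)) / n) atTop
      (𝓝 (b k)) := by
    rw [ae_all_iff]
    intro k
    exact LSQ.sllnX hXmeas hXindep hXlaw _ _ (hgmeas.mul (hφmeas k))
      (LSQ.bdd_mul hCg (hCφ k))
  have hpair : ∀ i j : ℕ, i ≠ j →
      IndepFun (fun ω => (X i ω, ε i ω)) (fun ω => (X j ω, ε j ω)) P :=
    fun i j hij => LSQ.pair_indepFun hXmeas hεmeas hXindep hεindep hXε hij
  have hWconv : ∀ᵐ ω ∂P, ∀ k : Fin p, Tendsto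
      (fun n : ℕ => (∑ j ∈ Finset.range n, ε j ω * φ k (X j ω)) / n) atTop
      (𝓝 (0 : ℝ)) := by
    rw [ae_all_iff]
    intro k
    exact LSQ.sllnW hXmeas hεmeas hXlaw hεlaw hmean hmoment hXε hpair _ _ (hφmeas k) (hCφ k)
  filter_upwards [hAconv, hGconv, hWconv] with ω hAc hGc hWc
  set Am : ℕ → Matrix (Fin p) (Fin p) ℝ :=
    (fun m => fun k l => (∑ j ∈ Finset.range m, φ k (X j ω) * φ l (X j ω)) / (m : ℝ))
    with hAmdef
  set bv : ℕ → Fin p → ℝ :=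
    (fun m k => (∑ j ∈ Finset.range m, (g (X j ω) + ε j ω) * φ k (X j ω)) / (m : ℝ))
    with hbvdef
  have hAmconv : Tendsto Am atTop (𝓝 A) := by
    refine tendsto_pi_nhds.mpr ?_
    intro k
    refine tendsto_pi_nhds.mpr ?_
    intro l
    exact hAc k l
  have hbvconv : ∀ k, Tendsto (fun m => bv m k) atTop (𝓝 (b k)) := by
    intro k
    have h2 := (hGc k).add (hWc k)
    rw [add_zero] at h2
    have e7 : ∀ m : ℕ, bv m k
        = (∑ j ∈ Finset.range m, g (X j ω) * φ k (X j ω)) / (m : ℝ)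
          + (∑ j ∈ Finset.range m, ε j ω * φ k (X j ω)) / (m : ℝ) := by
      intro m
      rw [← add_div, ← Finset.sum_add_distrib]
      show (∑ j ∈ Finset.range m, (g (X j ω) + ε j ω) * φ k (X j ω)) / (m : ℝ) = _
      congr 1
      exact Finset.sum_congr rfl fun j _ => by ring
    simp only [e7]
    exact h2
  have hNEm : ∀ m : ℕ, (Am m).mulVec (θhat m ω) = bv m := by
    intro m
    funext k
    have h8 := hNE m ω k
    show ∑ l, Am m k l * θhat m ω l = bv m k
    have : ∑ l, Am m k l * θhat m ω l
        = (∑ l, (∑ j ∈ Finset.range m, φ k (X j ω) * φ l (X j ω)) * θhat m ω l) / (m : ℝ) := by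
      rw [Finset.sum_div]
      exact Finset.sum_congr rfl fun l _ => by
        rw [div_mul_eq_mul_div]
    rw [this, h8]
  have hdet : Tendsto (fun m => (Am m).det) atTop (𝓝 A.det) :=
    ((Continuous.matrix_det continuous_id).tendsto A).comp hAmconv
  have hadj : Tendsto (fun m => (Am m).adjugate) atTop (𝓝 A.adjugate) :=
    ((Continuous.matrix_adjugate continuous_id).tendsto A).comp hAmconv
  have hev : ∀ᶠ m in atTop, (Am m).det ≠ 0 := hdet.eventually_ne hdetA
  have hkey : ∀ m : ℕ, (Am m).det ≠ 0 →
      θhat m ω = ((Am m).det)⁻¹ • ((Am m).adjugate.mulVec (bv m)) := by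
    intro m hm
    have h5 : (Am m).adjugate.mulVec (bv m) = (Am m).det • θhat m ω := by
      rw [← hNEm m, Matrix.mulVec_mulVec, Matrix.adjugate_mul, Matrix.smul_mulVec,
        Matrix.one_mulVec]
    rw [h5, smul_smul, inv_mul_cancel₀ hm, one_smul]
  have hlim2 : Tendsto (fun m => ((Am m).det)⁻¹ • ((Am m).adjugate.mulVec (bv m))) atTop
      (𝓝 (A.det⁻¹ • A.adjugate.mulVec b)) := by
    refine Tendsto.smul (hdet.inv₀ hdetA) ?_
    rw [tendsto_pi_nhds]
    intro k
    show Tendsto (fun m => ∑ l, (Am m).adjugate k l * bv m l) atTop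
      (𝓝 (∑ l, A.adjugate k l * b l))
    refine tendsto_finset_sum _ fun l _ => Tendsto.mul ?_ (hbvconv l)
    exact tendsto_pi_nhds.mp (tendsto_pi_nhds.mp hadj k) l
  have hfinal : A.det⁻¹ • A.adjugate.mulVec b = θstar := by
    rw [← hbstar, Matrix.mulVec_mulVec, Matrix.adjugate_mul, Matrix.smul_mulVec,
      Matrix.one_mulVec, smul_smul, inv_mul_cancel₀ hdetA, one_smul]
  rw [← hfinal]
  exact Tendsto.congr' (hev.mono fun m hm => (hkey m hm).symm) hlim2
end
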